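/- arXiv:1009.0720 — 6 statements merged into one kernel-verified Lean document; each statement's English description precedes it below -/
import Mathlib

section
/- Consider a mass-action system whose forward solutions from positive initial conditions are bounded. Suppose that for every semi-locking set I there exists α ∈ ℝ^m with α_i < 0 for i ∈ I and α_i = 0 for i ∉ I, such that for every compact subset K of L_I there exists a neighbourhood U of K in ℝ^m_{≥0} with ⟨α, Γ R(x)⟩ ≤ 0 for all x ∈ U. Then the system is persistent: for every x₀ ∈ ℝ^m_{>0}, ω(x₀) ∩ ∂ℝ^m_{>0} = ∅. -/
open scoped BigOperators
open Matrix Filter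

/-- The stoichiometric matrix `Γ ∈ ℝ^{m×r}`, `Γ j i = β i j - α i j`. -/
noncomputable def Gamma {m r : ℕ} (a b : Fin r → Fin m → ℕ) : Matrix (Fin m) (Fin r) ℝ :=
  fun j i => (b i j : ℝ) - (a i j : ℝ)

/-- Mass-action reaction rates `R_i(x) = k_i ∏_j x_j^{α_{ij}}`. -/
noncomputable def rate {m r : ℕ} (a : Fin r → Fin m → ℕ) (k : Fin r → ℝ)
    (x : Fin m → ℝ) : Fin r → ℝ :=
  fun i => k i * ∏ j, x j ^ (a i j)

/-- A nonempty `I` is a semi-locking set (siphon) if every reaction producing a species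
in `I` consumes a species in `I`. -/
def IsSemiLocking {m r : ℕ} (a b : Fin r → Fin m → ℕ) (I : Set (Fin m)) : Prop :=
  I.Nonempty ∧ ∀ i : Fin r, (∃ j ∈ I, 0 < b i j) → ∃ l ∈ I, 0 < a i l

/-- A nonempty `I` is a locking set (deadlock) if every reaction consumes a species in `I`. -/
def IsLocking {m r : ℕ} (a : Fin r → Fin m → ℕ) (I : Set (Fin m)) : Prop :=
  I.Nonempty ∧ ∀ i : Fin r, ∃ l ∈ I, 0 < a i l

/-- `L_I = {x ∈ ℝ^m_{≥0} : x_i = 0 for i ∈ I, x_i > 0 for i ∉ I}`. -/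
def LI {m : ℕ} (I : Set (Fin m)) : Set (Fin m → ℝ) :=
  {x | (∀ i, 0 ≤ x i) ∧ (∀ i ∈ I, x i = 0) ∧ ∀ i ∉ I, 0 < x i}

/-- Boundary of the positive orthant of `ℝ^m`. -/
def posBoundary (m : ℕ) : Set (Fin m → ℝ) :=
  {x | (∀ i, 0 ≤ x i) ∧ ∃ i, x i = 0}

/-- The stoichiometric subspace `S = range Γ`. -/
noncomputable def stoichSubspace {m r : ℕ} (a b : Fin r → Fin m → ℕ) :
    Submodule ℝ (Fin m → ℝ) :=
  LinearMap.range (Gamma a b).mulVecLin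

/-- The positive stoichiometric compatibility class `C_{x₀} = (x₀ + S) ∩ ℝ^m_{>0}`. -/
def compatClass {m r : ℕ} (a b : Fin r → Fin m → ℕ) (x₀ : Fin m → ℝ) :
    Set (Fin m → ℝ) :=
  {x | (∀ i, 0 < x i) ∧ x - x₀ ∈ stoichSubspace a b}

/-- `F_I = closure(C_{x₀}) ∩ L_I`. -/
def FI {m r : ℕ} (a b : Fin r → Fin m → ℕ) (x₀ : Fin m → ℝ) (I : Set (Fin m)) :
    Set (Fin m → ℝ) :=
  closure (compatClass a b x₀) ∩ LI I

/-- The dimension of the affine hull of a set in `ℝ^m`. -/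
noncomputable def setDim {m : ℕ} (F : Set (Fin m → ℝ)) : ℕ :=
  Module.finrank ℝ (affineSpan ℝ F).direction

/-- `F` is a facet of a compatibility class: nonempty with affine-hull dimension `s - 1`,
where `s = rank Γ`. -/
def IsFacet {m r : ℕ} (a b : Fin r → Fin m → ℕ) (F : Set (Fin m → ℝ)) : Prop :=
  F.Nonempty ∧ setDim F = (Gamma a b).rank - 1

/-- `F` is a vertex: nonempty with affine-hull dimension `0`. -/
def IsVertex {m : ℕ} (F : Set (Fin m → ℝ)) : Prop :=
  F.Nonempty ∧ setDim F = 0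

/-- A global forward solution of the mass-action system `ẋ = Γ R(x)`. -/
def IsForwardSolution {m r : ℕ} (a b : Fin r → Fin m → ℕ) (k : Fin r → ℝ)
    (x : ℝ → Fin m → ℝ) : Prop :=
  ∀ t : ℝ, 0 ≤ t → HasDerivAt x ((Gamma a b).mulVec (rate a k (x t))) t

/-- The ω-limit set of a forward trajectory. -/
def omegaLimitSet {m : ℕ} (x : ℝ → Fin m → ℝ) : Set (Fin m → ℝ) :=
  {y | MapClusterPt y atTop x}

/-- `R_i ≼_I R_j` : `α i l ≥ α j l` for all `l ∈ I`, strict for some `l ∈ I`. -/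
def prec {m r : ℕ} (a : Fin r → Fin m → ℕ) (I : Set (Fin m)) (i j : Fin r) : Prop :=
  (∀ l ∈ I, a j l ≤ a i l) ∧ ∃ l ∈ I, a j l < a i l

/-- `R_I = {(i,j) : R_i ≼_I R_j}`. -/
def precSet {m r : ℕ} (a : Fin r → Fin m → ℕ) (I : Set (Fin m)) : Set (Fin r × Fin r) :=
  {p | prec a I p.1 p.2}

/-- The feasibility cone relative to `J`. -/
def feasCone {r : ℕ} (J : Set (Fin r × Fin r)) (ε : ℝ) : Set (Fin r → ℝ) :=
  {v | (∀ i, 0 ≤ v i) ∧ ∀ p ∈ J, v p.1 ≤ ε * v p.2}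

/-- The criticality cone `C(I)`. -/
def critCone {m r : ℕ} (a b : Fin r → Fin m → ℕ) (I : Set (Fin m)) : Set (Fin r → ℝ) :=
  {v | (∀ i, 0 ≤ v i) ∧ ∀ l ∈ I, (Gamma a b).mulVec v l ≤ 0}

/-- `ker(I,J,ε)`. -/
def kerIJ {m r : ℕ} (a b : Fin r → Fin m → ℕ) (I : Set (Fin m))
    (J : Set (Fin r × Fin r)) (ε : ℝ) : Set (Fin r → ℝ) :=
  {v | (∀ i, 0 ≤ v i) ∧ (∀ l ∈ I, (Gamma a b).mulVec v l = 0) ∧ ∀ p ∈ J, v p.1 = ε * v p.2}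

/-- Dynamical non-emptiability (Angeli–De Leenheer–Sontag): `F_ε(I) ∩ C(I) = {0}`. -/
def DynNonEmptiable {m r : ℕ} (a b : Fin r → Fin m → ℕ) (I : Set (Fin m)) : Prop :=
  ∃ ε > (0:ℝ), critCone a b I ∩ feasCone (precSet a I) ε = {0}

/-- Weak dynamical non-emptiability: `C(I) ∩ F_ε(J) ⊆ ker(I,J,ε)` for some `ε > 0`, `J ⊆ R_I`. -/
def WeaklyDynNonEmptiable {m r : ℕ} (a b : Fin r → Fin m → ℕ) (I : Set (Fin m)) : Prop :=
  ∃ ε > (0:ℝ), ∃ J ⊆ precSet a I, critCone a b I ∩ feasCone J ε ⊆ kerIJ a b I J ε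

/-- `I` contains the support of a semi-conservation vector. -/
def ContainsSemiConsSupport {m r : ℕ} (a b : Fin r → Fin m → ℕ) (I : Set (Fin m)) : Prop :=
  ∃ c : Fin m → ℝ, (∀ i, 0 ≤ c i) ∧ (∃ i, 0 < c i) ∧
    Matrix.vecMul c (Gamma a b) = 0 ∧ ∀ i, 0 < c i → i ∈ I

/-- A semi-locking set is critical if it contains no support of a semi-conservation vector. -/
def IsCritical {m r : ℕ} (a b : Fin r → Fin m → ℕ) (I : Set (Fin m)) : Prop :=
  ¬ ContainsSemiConsSupport a b I

/-- Weak reversibility: in the directed reaction graph on complexes, the reactant complex of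
every reaction is reachable from its product complex (equivalently, every connected
component is strongly connected). -/
def WeaklyReversible {m r : ℕ} (a b : Fin r → Fin m → ℕ) : Prop :=
  ∀ i : Fin r,
    Relation.ReflTransGen (fun y z : Fin m → ℕ => ∃ i', a i' = y ∧ b i' = z) (b i) (a i)

/-- The system is conservative: `cᵀ Γ = 0` for some strictly positive `c`. -/
def Conservative {m r : ℕ} (a b : Fin r → Fin m → ℕ) : Prop :=
  ∃ c : Fin m → ℝ, (∀ i, 0 < c i) ∧ Matrix.vecMul c (Gamma a b) = 0

section PersistenceHelpers
open Set Metric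

section AlgebraHelpers

variable {m r : ℕ} (a b : Fin r → Fin m → ℕ) (k : Fin r → ℝ)

lemma rate_nonneg (hk : ∀ i, 0 < k i) {z : Fin m → ℝ} (hz : ∀ j, 0 ≤ z j) (i : Fin r) :
    0 ≤ rate a k z i :=
  mul_nonneg (hk i).le (Finset.prod_nonneg fun j _ => pow_nonneg (hz j) _)

lemma prod_pow_le {z : Fin m → ℝ} {Mb : ℝ} (hMb : 1 ≤ Mb)
    (hz : ∀ j, 0 ≤ z j) (hzB : ∀ j, z j ≤ Mb) (i : Fin r) {N : ℕ} (hN : ∑ j, a i j ≤ N) :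
    ∏ j, z j ^ a i j ≤ Mb ^ N := by
  calc ∏ j, z j ^ a i j ≤ ∏ j, Mb ^ a i j := by
        apply Finset.prod_le_prod (fun j _ => pow_nonneg (hz j) _)
          (fun j _ => pow_le_pow_left₀ (hz j) (hzB j) _)
    _ = Mb ^ (∑ j, a i j) := by rw [← Finset.prod_pow_eq_pow_sum]
    _ ≤ Mb ^ N := pow_le_pow_right₀ hMb hN

lemma prod_pow_le_linear {z : Fin m → ℝ} {Mb : ℝ} (hMb : 1 ≤ Mb)
    (hz : ∀ j, 0 ≤ z j) (hzB : ∀ j, z j ≤ Mb) (i : Fin r) (l : Fin m) (hal : 0 < a i l)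
    {N : ℕ} (hN : ∑ j, a i j ≤ N + 1) :
    ∏ j, z j ^ a i j ≤ z l * Mb ^ N := by
  have h0 : (0:ℝ) < Mb := lt_of_lt_of_le one_pos hMb
  obtain ⟨c, hc⟩ : ∃ c, a i l = c + 1 := ⟨a i l - 1, (Nat.succ_pred_eq_of_pos hal).symm⟩
  have hsplit : ∏ j, z j ^ a i j = z l ^ a i l * ∏ j ∈ Finset.univ.erase l, z j ^ a i j :=
    (Finset.mul_prod_erase Finset.univ _ (Finset.mem_univ l)).symm
  have h1 : z l ^ a i l ≤ z l * Mb ^ c := by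
    rw [hc, pow_succ']
    exact mul_le_mul_of_nonneg_left (pow_le_pow_left₀ (hz l) (hzB l) c) (hz l)
  have h2 : ∏ j ∈ Finset.univ.erase l, z j ^ a i j ≤ Mb ^ (∑ j ∈ Finset.univ.erase l, a i j) := by
    calc ∏ j ∈ Finset.univ.erase l, z j ^ a i j ≤ ∏ j ∈ Finset.univ.erase l, Mb ^ a i j :=
          Finset.prod_le_prod (fun j _ => pow_nonneg (hz j) _)
            (fun j _ => pow_le_pow_left₀ (hz j) (hzB j) _)
      _ = _ := by rw [← Finset.prod_pow_eq_pow_sum]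
  have hexp : c + ∑ j ∈ Finset.univ.erase l, a i j ≤ N := by
    have : a i l + ∑ j ∈ Finset.univ.erase l, a i j = ∑ j, a i j :=
      Finset.add_sum_erase Finset.univ _ (Finset.mem_univ l)
    omega
  calc ∏ j, z j ^ a i j = z l ^ a i l * ∏ j ∈ Finset.univ.erase l, z j ^ a i j := hsplit
    _ ≤ (z l * Mb ^ c) * Mb ^ (∑ j ∈ Finset.univ.erase l, a i j) := by
        apply mul_le_mul h1 h2 (Finset.prod_nonneg fun j _ => pow_nonneg (hz j) _)
        exact mul_nonneg (hz l) (pow_nonneg h0.le c)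
    _ = z l * Mb ^ (c + ∑ j ∈ Finset.univ.erase l, a i j) := by rw [pow_add]; ring
    _ ≤ z l * Mb ^ N := by
        apply mul_le_mul_of_nonneg_left (pow_le_pow_right₀ hMb hexp) (hz l)

/-- consumption bound: total consumption rate of species `l` is at most `C_l · z l`. -/
lemma consumption_le (hk : ∀ i, 0 < k i) {z : Fin m → ℝ} {Mb : ℝ} (hMb : 1 ≤ Mb)
    (hz : ∀ j, 0 ≤ z j) (hzB : ∀ j, z j ≤ Mb) {N : ℕ} (hN : ∀ i, ∑ j, a i j ≤ N + 1) (l : Fin m) :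
    ∑ i, (a i l : ℝ) * rate a k z i ≤ ((∑ i, (a i l : ℝ) * k i) * Mb ^ N) * z l := by
  rw [Finset.sum_mul, Finset.sum_mul]
  apply Finset.sum_le_sum
  intro i _
  rcases Nat.eq_zero_or_pos (a i l) with h0 | h0
  · simp [h0]
  · have : rate a k z i ≤ k i * (z l * Mb ^ N) :=
      mul_le_mul_of_nonneg_left (prod_pow_le_linear a hMb hz hzB i l h0 (hN i)) (hk i).le
    calc (a i l : ℝ) * rate a k z i ≤ (a i l : ℝ) * (k i * (z l * Mb ^ N)) :=
          mul_le_mul_of_nonneg_left this (Nat.cast_nonneg _)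
      _ = (a i l : ℝ) * k i * Mb ^ N * z l := by ring

/-- lower bound on the drift of coordinate `l`. -/
lemma mulVec_ge (hk : ∀ i, 0 < k i) {z : Fin m → ℝ} {Mb : ℝ} (hMb : 1 ≤ Mb)
    (hz : ∀ j, 0 ≤ z j) (hzB : ∀ j, z j ≤ Mb) {N : ℕ} (hN : ∀ i, ∑ j, a i j ≤ N + 1) (l : Fin m) :
    -(((∑ i, (a i l : ℝ) * k i) * Mb ^ N) * z l) ≤ (Gamma a b).mulVec (rate a k z) l := by
  have h1 : ∑ i, -((a i l : ℝ) * rate a k z i) ≤ (Gamma a b).mulVec (rate a k z) l := by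
    unfold Matrix.mulVec dotProduct Gamma
    apply Finset.sum_le_sum
    intro i _
    have hr := rate_nonneg a k hk hz i
    have hb : (0:ℝ) ≤ (b i l : ℝ) := Nat.cast_nonneg _
    show -((a i l : ℝ) * rate a k z i) ≤ ((b i l : ℝ) - (a i l : ℝ)) * rate a k z i
    nlinarith [mul_nonneg hb hr]
  calc -(((∑ i, (a i l : ℝ) * k i) * Mb ^ N) * z l) ≤ ∑ i, -((a i l : ℝ) * rate a k z i) := by
        rw [Finset.sum_neg_distrib]
        exact neg_le_neg (consumption_le a k hk hMb hz hzB hN l)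
    _ ≤ _ := h1

/-- absolute bound on the drift. -/
lemma mulVec_abs_le (hk : ∀ i, 0 < k i) {z : Fin m → ℝ} {Mb : ℝ} (hMb : 1 ≤ Mb)
    (hz : ∀ j, 0 ≤ z j) (hzB : ∀ j, z j ≤ Mb) {N : ℕ} (hN : ∀ i, ∑ j, a i j ≤ N) (l : Fin m) :
    |(Gamma a b).mulVec (rate a k z) l| ≤ ∑ i, ((a i l : ℝ) + b i l) * (k i * Mb ^ N) := by
  unfold Matrix.mulVec dotProduct Gamma
  calc |∑ i, ((b i l : ℝ) - a i l) * rate a k z i| ≤ ∑ i, |((b i l : ℝ) - a i l) * rate a k z i| :=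
        Finset.abs_sum_le_sum_abs _ _
    _ ≤ ∑ i, ((a i l : ℝ) + b i l) * (k i * Mb ^ N) := by
        apply Finset.sum_le_sum
        intro i _
        rw [abs_mul]
        have hr : |rate a k z i| ≤ k i * Mb ^ N := by
          rw [abs_of_nonneg (rate_nonneg a k hk hz i)]
          exact mul_le_mul_of_nonneg_left (prod_pow_le a hMb hz hzB i (hN i)) (hk i).le
        have hab : |(b i l : ℝ) - a i l| ≤ (a i l : ℝ) + b i l := by
          rw [abs_sub_comm]
          apply (abs_sub _ _).trans
          simp [abs_of_nonneg]
        apply mul_le_mul hab hr (abs_nonneg _)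
        positivity

end AlgebraHelpers

section CalcHelpers

lemma le_of_deriv_nonneg_Icc {g g' : ℝ → ℝ} {s₁ s₂ : ℝ} (h12 : s₁ ≤ s₂)
    (hder : ∀ t ∈ Icc s₁ s₂, HasDerivAt g (g' t) t)
    (hpos : ∀ t ∈ Ioo s₁ s₂, 0 ≤ g' t) : g s₁ ≤ g s₂ := by
  have hmono := monotoneOn_of_deriv_nonneg (convex_Icc s₁ s₂)
    (fun t ht => (hder t ht).continuousAt.continuousWithinAt)
    (fun t ht => by
      rw [interior_Icc] at ht
      exact (hder t (Ioo_subset_Icc_self ht)).differentiableAt.differentiableWithinAt)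
    (fun t ht => by
      rw [interior_Icc] at ht
      rw [(hder t (Ioo_subset_Icc_self ht)).deriv]
      exact hpos t ht)
  exact hmono (left_mem_Icc.2 h12) (right_mem_Icc.2 h12) h12

lemma ge_of_deriv_nonpos_Icc {g g' : ℝ → ℝ} {s₁ s₂ : ℝ} (h12 : s₁ ≤ s₂)
    (hder : ∀ t ∈ Icc s₁ s₂, HasDerivAt g (g' t) t)
    (hneg : ∀ t ∈ Ioo s₁ s₂, g' t ≤ 0) : g s₂ ≤ g s₁ := by
  have hmono := antitoneOn_of_deriv_nonpos (convex_Icc s₁ s₂)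
    (fun t ht => (hder t ht).continuousAt.continuousWithinAt)
    (fun t ht => by
      rw [interior_Icc] at ht
      exact (hder t (Ioo_subset_Icc_self ht)).differentiableAt.differentiableWithinAt)
    (fun t ht => by
      rw [interior_Icc] at ht
      rw [(hder t (Ioo_subset_Icc_self ht)).deriv]
      exact hneg t ht)
  exact hmono (left_mem_Icc.2 h12) (right_mem_Icc.2 h12) h12

end CalcHelpers

section OmegaHelpers

variable {m : ℕ} {x : ℝ → Fin m → ℝ}

lemma omega_isClosed : IsClosed (omegaLimitSet x) :=
  isClosed_setOf_clusterPt

lemma omega_subset_closure : omegaLimitSet x ⊆ closure (x '' Ici 0) := by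
  intro y hy
  rw [mem_closure_iff_clusterPt]
  have hle : map x atTop ≤ 𝓟 (x '' Ici 0) :=
    le_principal_iff.2 (mem_map.2 (mem_of_superset (Ici_mem_atTop 0)
      fun t ht => mem_image_of_mem x ht))
  exact ClusterPt.mono hy hle

lemma omega_exists_ge {y : Fin m → ℝ} (hy : y ∈ omegaLimitSet x) {s : Set (Fin m → ℝ)}
    (hs : s ∈ nhds y) (T : ℝ) : ∃ t ≥ T, x t ∈ s :=
  frequently_atTop.1 (mapClusterPt_iff_frequently.1 hy s hs) T

lemma mapClusterPt_of_seq {y : Fin m → ℝ} {t : ℕ → ℝ} (ht : Tendsto t atTop atTop)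
    (hlim : Tendsto (fun n => x (t n)) atTop (nhds y)) : MapClusterPt y atTop x := by
  rw [mapClusterPt_iff_frequently]
  intro s hs
  rw [frequently_atTop]
  intro T
  have h1 : ∀ᶠ n in atTop, x (t n) ∈ s := hlim hs
  have h2 : ∀ᶠ n in atTop, T ≤ t n := ht.eventually_ge_atTop T
  obtain ⟨n, hn1, hn2⟩ := (h1.and h2).exists
  exact ⟨t n, hn2, hn1⟩

lemma omega_attracting (hbdd : Bornology.IsBounded (x '' Ici 0)) {O : Set (Fin m → ℝ)}
    (hO : IsOpen O) (hsub : omegaLimitSet x ⊆ O) : ∀ᶠ t : ℝ in atTop, x t ∈ O := by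
  by_contra hcon
  have hfreq : ∃ᶠ t : ℝ in atTop, x t ∉ O := not_eventually.1 hcon
  have hsel : ∀ n : ℕ, ∃ t ≥ (n : ℝ), x t ∉ O := fun n => frequently_atTop.1 hfreq n
  choose t htge htnot using hsel
  have hmemc : ∀ n, x (t n) ∈ closure (x '' Ici 0) := fun n =>
    subset_closure (mem_image_of_mem x (le_trans (Nat.cast_nonneg n) (htge n)))
  obtain ⟨z, _, φ, hφ, hlim⟩ := hbdd.isCompact_closure.tendsto_subseq hmemc
  have htend : Tendsto (fun n => t (φ n)) atTop atTop := by
    apply tendsto_atTop_mono (fun n => le_trans (Nat.cast_le.2 hφ.le_apply) (htge (φ n)))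
    exact tendsto_natCast_atTop_atTop
  have hzω : z ∈ omegaLimitSet x := mapClusterPt_of_seq htend hlim
  have hev : ∀ᶠ n in atTop, x (t (φ n)) ∈ O := hlim (hO.mem_nhds (hsub hzω))
  obtain ⟨n, hn⟩ := hev.exists
  exact htnot (φ n) hn

end OmegaHelpers

section Positivity

lemma traj_pos {m r : ℕ} {a b : Fin r → Fin m → ℕ} {k : Fin r → ℝ} (hk : ∀ i, 0 < k i)
    {x : ℝ → Fin m → ℝ} {x₀ : Fin m → ℝ} (hx₀ : ∀ i, 0 < x₀ i) (hx0 : x 0 = x₀)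
    (hsol : IsForwardSolution a b k x) {Mb : ℝ} (hMb : 1 ≤ Mb)
    (hxB : ∀ t ≥ (0:ℝ), ∀ l, |x t l| ≤ Mb) :
    ∀ t ≥ (0:ℝ), ∀ l, 0 < x t l := by
  intro T hT l0
  by_contra hc
  push_neg at hc
  set N : ℕ := Finset.univ.sup (fun i => ∑ j, a i j) with hNdef
  have hN : ∀ i, ∑ j, a i j ≤ N := fun i => Finset.le_sup (f := fun i => ∑ j, a i j) (Finset.mem_univ i)
  set Z : Set ℝ := ⋃ j, (Icc 0 T ∩ (fun t => x t j) ⁻¹' Iic 0) with hZdef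
  have hxcont : ∀ t ∈ Icc (0:ℝ) T, ContinuousAt x t := fun t ht => (hsol t ht.1).continuousAt
  have hZclosed : IsClosed Z := by
    apply isClosed_iUnion_of_finite
    intro j
    apply ContinuousOn.preimage_isClosed_of_isClosed _ isClosed_Icc isClosed_Iic
    exact fun t ht => ((continuous_apply j).continuousAt.comp (hxcont t ht)).continuousWithinAt
  have hZne : Z.Nonempty := ⟨T, Set.mem_iUnion.2 ⟨l0, ⟨⟨hT, le_refl T⟩, hc⟩⟩⟩
  have hZbdd : BddBelow Z := ⟨0, fun t ht => by
    obtain ⟨j, hj⟩ := Set.mem_iUnion.1 ht; exact hj.1.1⟩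
  set τ := sInf Z with hτdef
  have hτZ : τ ∈ Z := hZclosed.csInf_mem hZne hZbdd
  obtain ⟨l, hl⟩ := Set.mem_iUnion.1 hτZ
  obtain ⟨⟨hτ0, hτT⟩, hlle⟩ := hl
  have hlle : x τ l ≤ 0 := hlle
  have hτpos : 0 < τ := by
    rcases lt_or_eq_of_le hτ0 with h | h
    · exact h
    · exfalso; rw [← h] at hlle; rw [hx0] at hlle; exact absurd hlle (not_le.2 (hx₀ l))
  have hpre : ∀ t, 0 ≤ t → t < τ → ∀ j, 0 < x t j := by
    intro t ht0 htτ j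
    by_contra hcj
    push_neg at hcj
    have : t ∈ Z := Set.mem_iUnion.2 ⟨j, ⟨⟨ht0, le_trans htτ.le hτT⟩, hcj⟩⟩
    exact absurd (csInf_le hZbdd this) (not_le.2 htτ)
  have hnonneg : ∀ t ∈ Icc (0:ℝ) τ, ∀ j, 0 ≤ x t j := by
    intro t ⟨ht0, htτ⟩ j
    rcases lt_or_eq_of_le htτ with h | h
    · exact (hpre t ht0 h j).le
    · by_contra hneg
      push_neg at hneg
      rw [h] at hneg
      have hca : ContinuousAt (fun s => x s j) τ :=
        (continuous_apply j).continuousAt.comp (hxcont τ ⟨hτ0, hτT⟩)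
      have hev : ∀ᶠ s in nhds τ, x s j < 0 := hca (Iio_mem_nhds hneg)
      have hev' : ∀ᶠ s in nhdsWithin τ (Iio τ), x s j < 0 := hev.filter_mono nhdsWithin_le_nhds
      have hmem : Ioo (0:ℝ) τ ∈ nhdsWithin τ (Iio τ) :=
        Ioo_mem_nhdsLT_of_mem ⟨hτpos, le_refl τ⟩
      obtain ⟨s, hs1, hs2⟩ := (hev'.and (eventually_of_mem hmem (fun y hy => hy))).exists
      exact absurd hs1 (not_lt.2 (hpre s hs2.1.le hs2.2 j).le)
  -- exponential comparison
  set C : ℝ := (∑ i, (a i l : ℝ) * k i) * Mb ^ N with hCdef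
  have hC0 : 0 ≤ C := by
    apply mul_nonneg _ (pow_nonneg (le_trans zero_le_one hMb) N)
    exact Finset.sum_nonneg fun i _ => mul_nonneg (Nat.cast_nonneg _) (hk i).le
  set D : ℝ → Fin m → ℝ := fun t => (Gamma a b).mulVec (rate a k (x t)) with hDdef
  set g : ℝ → ℝ := fun t => x t l * Real.exp (C * t) with hgdef
  set g' : ℝ → ℝ := fun t => D t l * Real.exp (C * t) + x t l * (Real.exp (C * t) * C)
    with hg'def
  have hg : ∀ t ∈ Icc (0:ℝ) τ, HasDerivAt g (g' t) t := by
    intro t ht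
    have hco : HasDerivAt (fun s => x s l) (D t l) t :=
      hasDerivAt_pi.1 (hsol t ht.1) l
    have h1 : HasDerivAt (fun s : ℝ => C * s) C t := by
      simpa using (hasDerivAt_id t).const_mul C
    have hexp : HasDerivAt (fun s : ℝ => Real.exp (C * s)) (Real.exp (C * t) * C) t := by
      simpa using h1.exp
    exact hco.mul hexp
  have hg'pos : ∀ t ∈ Ioo (0:ℝ) τ, 0 ≤ g' t := by
    intro t ht
    have hz : ∀ j, 0 ≤ x t j := fun j => (hpre t ht.1.le ht.2 j).le
    have hzB : ∀ j, x t j ≤ Mb := fun j =>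
      le_trans (le_abs_self _) (hxB t ht.1.le j)
    have hD := mulVec_ge a b k hk hMb hz hzB (fun i => le_trans (hN i) (Nat.le_succ N)) l
    have hE : (0:ℝ) < Real.exp (C * t) := Real.exp_pos _
    have hD' : -(C * x t l) ≤ D t l := hD
    show 0 ≤ D t l * Real.exp (C * t) + x t l * (Real.exp (C * t) * C)
    nlinarith [mul_nonneg (by linarith : (0:ℝ) ≤ D t l + C * x t l) hE.le]
  have hfin := le_of_deriv_nonneg_Icc hτ0 hg hg'pos
  have hg0 : g 0 = x₀ l := by simp [hgdef, hx0]
  have : 0 < x τ l := by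
    have hE : (0:ℝ) < Real.exp (C * τ) := Real.exp_pos _
    have hx₀l := hx₀ l
    rw [hg0] at hfin
    have hfin' : x₀ l ≤ x τ l * Real.exp (C * τ) := hfin
    by_contra hh
    push_neg at hh
    have hmp : x τ l * Real.exp (C * τ) ≤ 0 := mul_nonpos_iff.2 (Or.inr ⟨hh, hE.le⟩)
    linarith
  exact absurd hlle (not_le.2 this)

end Positivity


section Siphon

lemma norm_mulVec_le {m r : ℕ} (a b : Fin r → Fin m → ℕ) (k : Fin r → ℝ) (hk : ∀ i, 0 < k i)
    {z : Fin m → ℝ} {Mb : ℝ} (hMb : 1 ≤ Mb) (hz : ∀ j, 0 ≤ z j) (hzB : ∀ j, z j ≤ Mb)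
    {N : ℕ} (hN : ∀ i, ∑ j, a i j ≤ N) :
    ‖(Gamma a b).mulVec (rate a k z)‖ ≤
      (∑ l, ∑ i, ((a i l : ℝ) + b i l) * (k i * Mb ^ N)) + 1 := by
  have hMb0 : (0:ℝ) ≤ Mb := by linarith
  have hinner : ∀ l : Fin m, (0:ℝ) ≤ ∑ i, ((a i l : ℝ) + b i l) * (k i * Mb ^ N) := by
    intro l
    apply Finset.sum_nonneg
    intro i _
    exact mul_nonneg (add_nonneg (Nat.cast_nonneg _) (Nat.cast_nonneg _))
      (mul_nonneg (hk i).le (pow_nonneg hMb0 N))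
  have htot : (0:ℝ) ≤ (∑ l, ∑ i, ((a i l : ℝ) + b i l) * (k i * Mb ^ N)) + 1 := by
    have := Finset.sum_nonneg (fun l (_ : l ∈ Finset.univ) => hinner l)
    linarith
  rw [pi_norm_le_iff_of_nonneg htot]
  intro l
  rw [Real.norm_eq_abs]
  calc |(Gamma a b).mulVec (rate a k z) l| ≤ ∑ i, ((a i l : ℝ) + b i l) * (k i * Mb ^ N) :=
        mulVec_abs_le a b k hk hMb hz hzB hN l
    _ ≤ ∑ l', ∑ i, ((a i l' : ℝ) + b i l') * (k i * Mb ^ N) :=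
        Finset.single_le_sum (f := fun l' => ∑ i, ((a i l' : ℝ) + b i l') * (k i * Mb ^ N))
          (fun l' _ => hinner l') (Finset.mem_univ l)
    _ ≤ _ := by linarith

lemma zeroset_semilocking {m r : ℕ} {a b : Fin r → Fin m → ℕ} {k : Fin r → ℝ}
    (hk : ∀ i, 0 < k i) {x : ℝ → Fin m → ℝ} (hsol : IsForwardSolution a b k x)
    {Mb : ℝ} (hMb : 1 ≤ Mb) (hxB : ∀ t ≥ (0:ℝ), ∀ l, |x t l| ≤ Mb)
    (hxpos : ∀ t ≥ (0:ℝ), ∀ l, 0 < x t l)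
    {y : Fin m → ℝ} (hy : y ∈ omegaLimitSet x) (hynn : ∀ l, 0 ≤ y l)
    (hyI : ({i | y i = 0} : Set (Fin m)).Nonempty) :
    IsSemiLocking a b {i | y i = 0} := by
  refine ⟨hyI, ?_⟩
  intro i₀ hprod
  obtain ⟨j, hjI, hbpos⟩ := hprod
  have hyj : y j = 0 := hjI
  by_contra hcon
  push_neg at hcon
  have ha0 : ∀ l, y l = 0 → a i₀ l = 0 := fun l hl => Nat.le_zero.1 (hcon l hl)
  obtain ⟨N, hNdef⟩ : ∃ N : ℕ, N = Finset.univ.sup (fun i => ∑ j, a i j) := ⟨_, rfl⟩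
  have hN : ∀ i, ∑ j, a i j ≤ N := fun i => by
    rw [hNdef]; exact Finset.le_sup (f := fun i => ∑ j, a i j) (Finset.mem_univ i)
  -- positive rate at y
  obtain ⟨R₀, hR₀def⟩ : ∃ R₀ : ℝ, R₀ = rate a k y i₀ := ⟨_, rfl⟩
  have hR₀ : 0 < R₀ := by
    rw [hR₀def]
    apply mul_pos (hk i₀)
    apply Finset.prod_pos
    intro j' _
    rcases Nat.eq_zero_or_pos (a i₀ j') with h | h
    · rw [h, pow_zero]; exact one_pos
    · have : y j' ≠ 0 := fun hz => by rw [ha0 j' hz] at h; exact absurd h (lt_irrefl 0)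
      exact pow_pos (lt_of_le_of_ne (hynn j') (Ne.symm this)) _
  -- constants
  obtain ⟨C, hCdef⟩ : ∃ C : ℝ, C = (∑ i, (a i j : ℝ) * k i) * Mb ^ N + 1 := ⟨_, rfl⟩
  have hC1 : 0 < C := by
    rw [hCdef]
    have : (0:ℝ) ≤ (∑ i, (a i j : ℝ) * k i) * Mb ^ N := by
      apply mul_nonneg _ (pow_nonneg (by linarith) N)
      exact Finset.sum_nonneg fun i _ => mul_nonneg (Nat.cast_nonneg _) (hk i).le
    linarith
  obtain ⟨Md, hMddef⟩ :
      ∃ Md : ℝ, Md = (∑ l, ∑ i, ((a i l : ℝ) + b i l) * (k i * Mb ^ N)) + 1 := ⟨_, rfl⟩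
  have hMdpos : 0 < Md := by
    rw [hMddef]
    have : (0:ℝ) ≤ ∑ l, ∑ i, ((a i l : ℝ) + b i l) * (k i * Mb ^ N) := by
      apply Finset.sum_nonneg; intro l _
      apply Finset.sum_nonneg; intro i _
      exact mul_nonneg (add_nonneg (Nat.cast_nonneg _) (Nat.cast_nonneg _))
        (mul_nonneg (hk i).le (pow_nonneg (by linarith) N))
    linarith
  have hMd : ∀ t ≥ (0:ℝ), ‖(Gamma a b).mulVec (rate a k (x t))‖ ≤ Md := by
    intro t ht
    rw [hMddef]
    exact norm_mulVec_le a b k hk hMb (fun l => (hxpos t ht l).le)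
      (fun l => le_trans (le_abs_self _) (hxB t ht l)) hN
  -- continuity of the rate of reaction i₀
  have hRc : Continuous fun z : Fin m → ℝ => rate a k z i₀ := by
    unfold rate
    exact continuous_const.mul (continuous_finset_prod _ fun j' _ =>
      (continuous_apply j').pow _)
  have hnhds : {z : Fin m → ℝ | R₀ / 2 < rate a k z i₀} ∈ nhds y := by
    have : Set.Ioi (R₀ / 2) ∈ nhds (rate a k y i₀) :=
      Ioi_mem_nhds (by rw [← hR₀def]; linarith)
    exact hRc.continuousAt.preimage_mem_nhds this
  obtain ⟨ε, hε0, hball⟩ := Metric.mem_nhds_iff.1 hnhds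
  obtain ⟨δ, hδdef⟩ : ∃ δ : ℝ, δ = min (ε / 2) (R₀ / (4 * C)) := ⟨_, rfl⟩
  have hδ0 : 0 < δ := by
    rw [hδdef]
    exact lt_min (by linarith) (div_pos hR₀ (by linarith))
  have hδC : C * δ ≤ R₀ / 4 := by
    have h1 : δ ≤ R₀ / (4 * C) := by rw [hδdef]; exact min_le_right _ _
    calc C * δ ≤ C * (R₀ / (4 * C)) := mul_le_mul_of_nonneg_left h1 hC1.le
      _ = R₀ / 4 := by field_simp
  have hrate : ∀ z : Fin m → ℝ, dist z y ≤ δ → R₀ / 2 < rate a k z i₀ := by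
    intro z hz
    apply hball
    rw [Metric.mem_ball]
    have : δ ≤ ε / 2 := by rw [hδdef]; exact min_le_left _ _
    linarith
  -- drift lower bound near y
  have hdrift : ∀ t ≥ (0:ℝ), dist (x t) y ≤ δ →
      R₀ / 4 ≤ (Gamma a b).mulVec (rate a k (x t)) j := by
    intro t ht hdist
    have hz : ∀ l, 0 ≤ x t l := fun l => (hxpos t ht l).le
    have hzB : ∀ l, x t l ≤ Mb := fun l => le_trans (le_abs_self _) (hxB t ht l)
    have hcons : ∑ i, (a i j : ℝ) * rate a k (x t) i ≤ (C - 1) * x t j := by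
      have h1 := consumption_le a k hk hMb hz hzB (fun i => le_trans (hN i) (Nat.le_succ N)) j
      have h2 : ((∑ i, (a i j : ℝ) * k i) * Mb ^ N) * x t j = (C - 1) * x t j := by
        rw [hCdef]; ring
      linarith
    have hprodge : R₀ / 2 ≤ ∑ i, (b i j : ℝ) * rate a k (x t) i := by
      have h1 : (b i₀ j : ℝ) * rate a k (x t) i₀ ≤ ∑ i, (b i j : ℝ) * rate a k (x t) i :=
        Finset.single_le_sum (f := fun i => (b i j : ℝ) * rate a k (x t) i)
          (fun i _ => mul_nonneg (Nat.cast_nonneg _) (rate_nonneg a k hk hz i))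
          (Finset.mem_univ i₀)
      have h2 : (1:ℝ) ≤ (b i₀ j : ℝ) := by exact_mod_cast hbpos
      have h3 : R₀ / 2 < rate a k (x t) i₀ := hrate (x t) hdist
      nlinarith [rate_nonneg a k hk hz i₀]
    have hxtj : x t j ≤ δ := by
      have h3 := dist_le_pi_dist (x t) y j
      rw [hyj, Real.dist_eq, sub_zero] at h3
      calc x t j ≤ |x t j| := le_abs_self _
        _ ≤ dist (x t) y := h3
        _ ≤ δ := hdist
    have hsplit : (Gamma a b).mulVec (rate a k (x t)) j
        = ∑ i, (b i j : ℝ) * rate a k (x t) i - ∑ i, (a i j : ℝ) * rate a k (x t) i := by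
      unfold Matrix.mulVec dotProduct Gamma
      rw [← Finset.sum_sub_distrib]
      apply Finset.sum_congr rfl
      intro i _
      ring
    rw [hsplit]
    have hCx : (C - 1) * x t j ≤ C * δ := by
      have h1 : (C - 1) * x t j ≤ C * x t j := by nlinarith [hz j]
      have h2 : C * x t j ≤ C * δ := mul_le_mul_of_nonneg_left hxtj hC1.le
      linarith
    linarith
  -- time step
  obtain ⟨h0, hh0def⟩ : ∃ h0 : ℝ, h0 = δ / (2 * Md) := ⟨_, rfl⟩
  have hh0 : 0 < h0 := by
    rw [hh0def]; exact div_pos hδ0 (by linarith)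
  have hMdh0 : Md * h0 = δ / 2 := by
    rw [hh0def]; field_simp
  -- Lipschitz estimate
  have hLip : ∀ t ≥ h0, ∀ s ∈ Set.Icc (t - h0) t, dist (x s) (x t) ≤ δ / 2 := by
    intro t ht s hs
    have hs0 : (0:ℝ) ≤ t - h0 := by linarith
    have := Convex.norm_image_sub_le_of_norm_hasDerivWithin_le
      (f := x) (f' := fun s => (Gamma a b).mulVec (rate a k (x s)))
      (s := Set.Icc (t - h0) t) (C := Md)
      (fun u hu => (hsol u (by linarith [hu.1])).hasDerivWithinAt)
      (fun u hu => hMd u (by linarith [hu.1]))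
      (convex_Icc _ _) (Set.right_mem_Icc.2 (by linarith)) hs
    rw [dist_eq_norm]
    calc ‖x s - x t‖ ≤ Md * ‖s - t‖ := this
      _ ≤ Md * h0 := by
          apply mul_le_mul_of_nonneg_left _ hMdpos.le
          rw [Real.norm_eq_abs, abs_sub_comm,
            abs_of_nonneg (by linarith [hs.2] : (0:ℝ) ≤ t - s)]
          linarith [hs.1]
      _ = δ / 2 := hMdh0
  -- coordinate j grows near y
  have hgrow : ∀ t ≥ h0, dist (x t) y < δ / 2 → R₀ / 4 * h0 ≤ x t j := by
    intro t ht hclose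
    have hIcc : ∀ s ∈ Set.Icc (t - h0) t, dist (x s) y ≤ δ := by
      intro s hs
      calc dist (x s) y ≤ dist (x s) (x t) + dist (x t) y := dist_triangle _ _ _
        _ ≤ δ / 2 + δ / 2 := add_le_add (hLip t ht s hs) hclose.le
        _ = δ := by ring
    have hder : ∀ s ∈ Set.Icc (t - h0) t,
        HasDerivAt (fun s => x s j - R₀ / 4 * s)
          ((Gamma a b).mulVec (rate a k (x s)) j - R₀ / 4) s := by
      intro s hs
      have hs0 : (0:ℝ) ≤ s := by linarith [hs.1, ht, hh0]
      have hco : HasDerivAt (fun u => x u j) ((Gamma a b).mulVec (rate a k (x s)) j) s :=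
        hasDerivAt_pi.1 (hsol s hs0) j
      have hlin : HasDerivAt (fun u : ℝ => R₀ / 4 * u) (R₀ / 4) s := by
        simpa using (hasDerivAt_id s).const_mul (R₀ / 4)
      exact hco.sub hlin
    have hpos' : ∀ s ∈ Set.Ioo (t - h0) t,
        0 ≤ (Gamma a b).mulVec (rate a k (x s)) j - R₀ / 4 := by
      intro s hs
      have hs0 : (0:ℝ) ≤ s := by linarith [hs.1, ht, hh0]
      have := hdrift s hs0 (hIcc s ⟨hs.1.le, hs.2.le⟩)
      linarith
    have hmono := le_of_deriv_nonneg_Icc (by linarith : t - h0 ≤ t) hder hpos'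
    have hxnn : 0 ≤ x (t - h0) j := (hxpos (t - h0) (by linarith) j).le
    have : x (t - h0) j - R₀ / 4 * (t - h0) ≤ x t j - R₀ / 4 * t := hmono
    nlinarith
  -- contradiction with y being a cluster point
  have hsmall : 0 < min (δ / 2) (R₀ / 4 * h0) := lt_min (by linarith) (by positivity)
  obtain ⟨t, ht, hmem⟩ := omega_exists_ge hy (Metric.ball_mem_nhds y hsmall) h0
  rw [Metric.mem_ball] at hmem
  have h1 : dist (x t) y < δ / 2 := lt_of_lt_of_le hmem (min_le_left _ _)
  have h2 := hgrow t ht h1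
  have h3 : dist (x t j) (y j) ≤ dist (x t) y := dist_le_pi_dist (x t) y j
  rw [hyj, Real.dist_eq, sub_zero] at h3
  have h4 : |x t j| < R₀ / 4 * h0 :=
    lt_of_le_of_lt h3 (lt_of_lt_of_le hmem (min_le_right _ _))
  have := le_abs_self (x t j)
  linarith

end Siphon

end PersistenceHelpers

open Set Metric

/-- a mass-action system with bounded forward solutions is persistent provided,
for every semi-locking set `I`, there is `α` negative on `I` and zero off `I` with
`⟨α, Γ R(x)⟩ ≤ 0` in a neighbourhood (in `ℝ^m_{≥0}`) of every compact subset of `L_I`. -/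
theorem stmt5 {m r : ℕ} (a b : Fin r → Fin m → ℕ) (k : Fin r → ℝ) (hk : ∀ i, 0 < k i)
    (hbd : ∀ x₀ : Fin m → ℝ, (∀ i, 0 < x₀ i) → ∀ x : ℝ → Fin m → ℝ, x 0 = x₀ →
      IsForwardSolution a b k x → Bornology.IsBounded (x '' Set.Ici (0:ℝ)))
    (hα : ∀ I : Set (Fin m), IsSemiLocking a b I → ∃ α : Fin m → ℝ,
      (∀ i ∈ I, α i < 0) ∧ (∀ i ∉ I, α i = 0) ∧
      ∀ K : Set (Fin m → ℝ), IsCompact K → K ⊆ LI I →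
        ∃ U : Set (Fin m → ℝ), IsOpen U ∧ K ⊆ U ∧ ∀ x ∈ U, (∀ l, 0 ≤ x l) →
          ∑ i, α i * ((Gamma a b).mulVec (rate a k x)) i ≤ 0) :
    ∀ x₀ : Fin m → ℝ, (∀ i, 0 < x₀ i) → ∀ x : ℝ → Fin m → ℝ, x 0 = x₀ →
      IsForwardSolution a b k x → omegaLimitSet x ∩ posBoundary m = ∅ := by
  intro x₀ hx₀ x hx0 hsol
  by_contra hne
  obtain ⟨y₀, hy₀Ω, hy₀b⟩ := Set.nonempty_iff_ne_empty.2 hne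
  have hbdd := hbd x₀ hx₀ x hx0 hsol
  -- uniform bound on the trajectory
  obtain ⟨B, hB⟩ := isBounded_iff_forall_norm_le.1 hbdd
  obtain ⟨Mb, hMbdef⟩ : ∃ Mb : ℝ, Mb = max 1 B := ⟨_, rfl⟩
  have hMb1 : 1 ≤ Mb := by rw [hMbdef]; exact le_max_left _ _
  have hxB : ∀ t ≥ (0:ℝ), ∀ l, |x t l| ≤ Mb := by
    intro t ht l
    have h1 : ‖x t‖ ≤ B := hB (x t) (Set.mem_image_of_mem x ht)
    have h2 : |x t l| ≤ ‖x t‖ := by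
      rw [← Real.norm_eq_abs]; exact norm_le_pi_norm (x t) l
    rw [hMbdef]
    exact le_trans (le_trans h2 h1) (le_max_right _ _)
  have hxpos := traj_pos hk hx₀ hx0 hsol hMb1 hxB
  -- ω-limit set facts
  have hΩclosed : IsClosed (omegaLimitSet x) := omega_isClosed
  have hΩcompact : IsCompact (omegaLimitSet x) :=
    hbdd.isCompact_closure.of_isClosed_subset hΩclosed omega_subset_closure
  have hΩnn : ∀ z ∈ omegaLimitSet x, ∀ l, 0 ≤ z l := by
    intro z hz l
    by_contra hneg; push_neg at hneg
    have hopen : IsOpen {w : Fin m → ℝ | w l < 0} :=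
      isOpen_lt (continuous_apply l) continuous_const
    obtain ⟨t, ht, hmem⟩ := omega_exists_ge hz (hopen.mem_nhds hneg) 0
    exact absurd hmem (not_lt.2 (hxpos t ht l).le)
  -- choose a maximal zero set among ω-limit points
  obtain ⟨F, hFdef⟩ : ∃ F : Set (Set (Fin m)),
      F = {I | ∃ z ∈ omegaLimitSet x, I = {i | z i = 0} ∧ I.Nonempty} := ⟨_, rfl⟩
  have hFne : F.Nonempty := by
    rw [hFdef]
    obtain ⟨i, hi⟩ := hy₀b.2
    exact ⟨{i | y₀ i = 0}, y₀, hy₀Ω, rfl, ⟨i, hi⟩⟩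
  obtain ⟨I, hIF, hImax⟩ : ∃ I ∈ F, ∀ J ∈ F, id I ≤ id J → id I = id J := by
    obtain ⟨I, hI1, hI2⟩ := Set.Finite.exists_maximalFor id F (Set.toFinite F) hFne
    exact ⟨I, hI1, fun J hJ h => le_antisymm h (hI2 hJ h)⟩
  rw [hFdef] at hIF
  obtain ⟨y, hyΩ, hyzero, hIne⟩ := hIF
  have hynn : ∀ l, 0 ≤ y l := hΩnn y hyΩ
  have hsemi : IsSemiLocking a b I := by
    rw [hyzero]
    exact zeroset_semilocking hk hsol hMb1 hxB hxpos hyΩ hynn (hyzero ▸ hIne)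
  obtain ⟨α, hαneg, hαzero, hαK⟩ := hα I hsemi
  -- the Lyapunov functional
  obtain ⟨V, hVapp⟩ : ∃ V : (Fin m → ℝ) → ℝ, ∀ z, V z = ∑ i, α i * z i :=
    ⟨_, fun _ => rfl⟩
  have hVfun : V = fun z => ∑ i, α i * z i := funext hVapp
  have hVcont : Continuous V := by
    rw [hVfun]
    exact continuous_finset_sum _ fun i _ => continuous_const.mul (continuous_apply i)
  have hVy : V y = 0 := by
    rw [hVapp]
    apply Finset.sum_eq_zero
    intro i _
    by_cases hi : i ∈ I
    · rw [hyzero] at hi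
      rw [Set.mem_setOf_eq] at hi
      rw [hi, mul_zero]
    · rw [hαzero i hi, zero_mul]
  have hterm_nonpos : ∀ z : Fin m → ℝ, (∀ l, 0 ≤ z l) → ∀ i, α i * z i ≤ 0 := by
    intro z hz i
    by_cases hi : i ∈ I
    · exact mul_nonpos_iff.2 (Or.inr ⟨(hαneg i hi).le, hz i⟩)
    · rw [hαzero i hi, zero_mul]
  have hVnonpos : ∀ z : Fin m → ℝ, (∀ l, 0 ≤ z l) → V z ≤ 0 := by
    intro z hz
    rw [hVapp]
    exact Finset.sum_nonpos fun i _ => hterm_nonpos z hz i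
  have hVzero_imp : ∀ z : Fin m → ℝ, (∀ l, 0 ≤ z l) → V z = 0 → ∀ i ∈ I, z i = 0 := by
    intro z hz hV0 i hi
    rw [hVapp] at hV0
    have h1 := (Finset.sum_eq_zero_iff_of_nonpos
      (fun i' (_ : i' ∈ Finset.univ) => hterm_nonpos z hz i')).1 hV0 i (Finset.mem_univ i)
    rcases mul_eq_zero.1 h1 with h | h
    · exact absurd h (ne_of_lt (hαneg i hi))
    · exact h
  -- the compact face M
  obtain ⟨M, hMdef⟩ : ∃ M : Set (Fin m → ℝ),
      M = omegaLimitSet x ∩ {z | ∀ i ∈ I, z i = 0} := ⟨_, rfl⟩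
  have hMclosed : IsClosed M := by
    rw [hMdef]
    have : {z : Fin m → ℝ | ∀ i ∈ I, z i = 0} = ⋂ i ∈ I, {z : Fin m → ℝ | z i = 0} := by
      ext z; simp [Set.mem_iInter]
    rw [this]
    exact hΩclosed.inter (isClosed_biInter fun i _ =>
      isClosed_eq (continuous_apply i) continuous_const)
  have hMcompact : IsCompact M :=
    hΩcompact.of_isClosed_subset hMclosed (by rw [hMdef]; exact Set.inter_subset_left)
  have hMLI : M ⊆ LI I := by
    intro z hz
    rw [hMdef] at hz
    refine ⟨hΩnn z hz.1, hz.2, ?_⟩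
    intro l hlI
    by_contra hneg; push_neg at hneg
    have hzl : z l = 0 := le_antisymm hneg (hΩnn z hz.1 l)
    have hzF : {i | z i = 0} ∈ F := by
      rw [hFdef]; exact ⟨z, hz.1, rfl, ⟨l, hzl⟩⟩
    have hsub : I ⊆ {i | z i = 0} := fun i hi => hz.2 i hi
    have heq : I = {i | z i = 0} := hImax _ hzF hsub
    exact hlI (by rw [heq]; exact hzl)
  obtain ⟨U, hUopen, hMU, hUineq⟩ := hαK M hMcompact hMLI
  have hyM : y ∈ M := by
    rw [hMdef]
    exact ⟨hyΩ, fun i hi => by rw [hyzero] at hi; exact hi⟩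
  -- derivative of V along the flow
  have hVder : ∀ t : ℝ, 0 ≤ t → HasDerivAt (fun s => V (x s))
      (∑ i, α i * (Gamma a b).mulVec (rate a k (x t)) i) t := by
    intro t ht
    have h1 : HasDerivAt (fun s => ∑ i, α i * x s i)
        (∑ i, α i * (Gamma a b).mulVec (rate a k (x t)) i) t := by
      apply HasDerivAt.fun_sum
      intro i _
      exact (hasDerivAt_pi.1 (hsol t ht) i).const_mul (α i)
    have h2 : (fun s => V (x s)) = fun s => ∑ i, α i * x s i :=
      funext fun s => hVapp (x s)
    rw [h2]
    exact h1
  have hVmono : ∀ s₁ s₂ : ℝ, 0 ≤ s₁ → s₁ ≤ s₂ → (∀ t ∈ Set.Ioo s₁ s₂, x t ∈ U) →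
      V (x s₂) ≤ V (x s₁) := by
    intro s₁ s₂ h0 h12 hU
    apply ge_of_deriv_nonpos_Icc h12 (fun t ht => hVder t (by linarith [ht.1]))
    intro t ht
    exact hUineq (x t) (hU t ht) (fun l => (hxpos t (by linarith [ht.1]) l).le)
  -- V is strictly negative along the trajectory
  obtain ⟨i₁, hi₁⟩ := hIne
  have hVxneg : ∀ t ≥ (0:ℝ), V (x t) < 0 := by
    intro t ht
    rw [hVapp]
    have hsplit : α i₁ * x t i₁ + ∑ i ∈ Finset.univ.erase i₁, α i * x t i
        = ∑ i, α i * x t i :=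
      Finset.add_sum_erase Finset.univ (fun i => α i * x t i) (Finset.mem_univ i₁)
    have hrest : ∑ i ∈ Finset.univ.erase i₁, α i * x t i ≤ 0 :=
      Finset.sum_nonpos fun i _ => hterm_nonpos (x t) (fun l => (hxpos t ht l).le) i
    have hmain : α i₁ * x t i₁ < 0 :=
      mul_neg_of_neg_of_pos (hαneg i₁ hi₁) (hxpos t ht i₁)
    linarith [hsplit]
  -- main dichotomy
  by_cases hΩU : omegaLimitSet x ⊆ U
  · -- entire ω-limit set inside U : V is eventually nonincreasing
    obtain ⟨T₀, hT₀⟩ := eventually_atTop.1 (omega_attracting hbdd hUopen hΩU)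
    obtain ⟨T, hTdef⟩ : ∃ T : ℝ, T = max T₀ 0 := ⟨_, rfl⟩
    have hTnn : 0 ≤ T := by rw [hTdef]; exact le_max_right _ _
    have hUall : ∀ t ≥ T, x t ∈ U := fun t ht =>
      hT₀ t (le_trans (by rw [hTdef]; exact le_max_left _ _) ht)
    have hmono : ∀ t ≥ T, V (x t) ≤ V (x T) := fun t ht =>
      hVmono T t hTnn ht (fun s hs => hUall s hs.1.le)
    have hVT := hVxneg T hTnn
    have hopen : IsOpen {w : Fin m → ℝ | V (x T) < V w} :=
      isOpen_lt continuous_const hVcont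
    have hyin : V (x T) < V y := by rw [hVy]; exact hVT
    obtain ⟨t, ht, hmem⟩ := omega_exists_ge hyΩ (hopen.mem_nhds hyin) T
    exact absurd (hmono t ht) (not_le.2 hmem)
  · -- some ω-limit point lies outside U
    have hKne : (omegaLimitSet x \ U).Nonempty := Set.diff_nonempty.2 hΩU
    have hKcompact : IsCompact (omegaLimitSet x \ U) := hΩcompact.diff hUopen
    obtain ⟨z₀, hz₀K, hz₀max⟩ := hKcompact.exists_isMaxOn hKne hVcont.continuousOn
    obtain ⟨c, hcdef⟩ : ∃ c : ℝ, c = V z₀ := ⟨_, rfl⟩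
    have hc0 : c < 0 := by
      rw [hcdef]
      rcases lt_or_eq_of_le (hVnonpos z₀ (hΩnn z₀ hz₀K.1)) with h | h
      · exact h
      · exfalso
        have hzM : z₀ ∈ M := by
          rw [hMdef]
          exact ⟨hz₀K.1, hVzero_imp z₀ (hΩnn z₀ hz₀K.1) h⟩
        exact hz₀K.2 (hMU hzM)
    have hcover : omegaLimitSet x ⊆ U ∪ {w | V w < c / 2} := by
      intro w hw
      by_cases hwU : w ∈ U
      · exact Or.inl hwU
      · right
        have h1 : V w ≤ c := by rw [hcdef]; exact hz₀max ⟨hw, hwU⟩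
        show V w < c / 2
        linarith
    have hopenUN : IsOpen (U ∪ {w : Fin m → ℝ | V w < c / 2}) :=
      hUopen.union (isOpen_lt hVcont continuous_const)
    obtain ⟨T₀, hT₀⟩ := eventually_atTop.1 (omega_attracting hbdd hopenUN hcover)
    obtain ⟨T, hTdef⟩ : ∃ T : ℝ, T = max T₀ 0 := ⟨_, rfl⟩
    have hTnn : 0 ≤ T := by rw [hTdef]; exact le_max_right _ _
    have hUall : ∀ t ≥ T, x t ∈ U ∪ {w | V w < c / 2} := fun t ht =>
      hT₀ t (le_trans (by rw [hTdef]; exact le_max_left _ _) ht)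
    -- a time with small V
    have hz₀nhds : {w : Fin m → ℝ | V w < c / 2} ∈ nhds z₀ :=
      (isOpen_lt hVcont continuous_const).mem_nhds
        (by show V z₀ < c / 2; rw [← hcdef]; linarith)
    obtain ⟨t₁, ht₁T, ht₁V⟩ := omega_exists_ge hz₀K.1 hz₀nhds T
    have ht₁0 : 0 ≤ t₁ := le_trans hTnn ht₁T
    have ht₁V : V (x t₁) < c / 2 := ht₁V
    -- V stays below c/2 afterwards
    have hclaim : ∀ t ≥ t₁, V (x t) ≤ c / 2 := by
      intro t₂ ht₂
      by_contra hgt; push_neg at hgt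
      obtain ⟨A, hAdef⟩ : ∃ A : Set ℝ,
          A = Set.Icc t₁ t₂ ∩ (fun t => V (x t)) ⁻¹' Set.Iic (c / 2) := ⟨_, rfl⟩
      have hVxcont : ContinuousOn (fun t => V (x t)) (Set.Icc t₁ t₂) := fun t ht =>
        ((hVder t (by linarith [ht.1])).continuousAt).continuousWithinAt
      have hAclosed : IsClosed A := by
        rw [hAdef]
        exact hVxcont.preimage_isClosed_of_isClosed isClosed_Icc isClosed_Iic
      have hAne : A.Nonempty := by
        rw [hAdef]; exact ⟨t₁, ⟨le_refl _, ht₂⟩, ht₁V.le⟩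
      have hAbdd : BddAbove A := by
        rw [hAdef]; exact ⟨t₂, fun u hu => hu.1.2⟩
      have hmemA : ∀ u : ℝ, u ∈ A ↔ (t₁ ≤ u ∧ u ≤ t₂) ∧ V (x u) ≤ c / 2 := by
        intro u
        rw [hAdef]
        constructor
        · rintro ⟨h1, h2⟩; exact ⟨h1, h2⟩
        · rintro ⟨h1, h2⟩; exact ⟨h1, h2⟩
      obtain ⟨⟨hτ1, hτ2⟩, hτV⟩ := (hmemA (sSup A)).1 (hAclosed.csSup_mem hAne hAbdd)
      have hτlt : sSup A < t₂ := lt_of_le_of_ne hτ2 (fun h => by rw [h] at hτV; linarith)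
      have hUon : ∀ s ∈ Set.Ioo (sSup A) t₂, x s ∈ U := by
        intro s hs
        have hsT : s ≥ T := by linarith [hs.1, hτ1, ht₁T]
        rcases hUall s hsT with h | h
        · exact h
        · exfalso
          have hsA : s ∈ A := (hmemA s).2 ⟨⟨le_trans hτ1 hs.1.le, hs.2.le⟩, le_of_lt h⟩
          exact absurd (le_csSup hAbdd hsA) (not_le.2 hs.1)
      have := hVmono (sSup A) t₂ (by linarith [hτ1, ht₁0]) hτlt.le hUon
      linarith
    have hopen2 : IsOpen {w : Fin m → ℝ | c / 2 < V w} :=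
      isOpen_lt continuous_const hVcont
    have hyin : c / 2 < V y := by rw [hVy]; linarith
    obtain ⟨t, ht, hmem⟩ := omega_exists_ge hyΩ (hopen2.mem_nhds hyin) t₁
    exact absurd (hclaim t ht) (not_le.2 hmem)
end

section
/- Consider a weakly reversible mass-action system with a semi-locking set I ⊆ {1,…,m}. If F_I = closure(C_{x₀}) ∩ L_I is a facet of C_{x₀} for some x₀ ∈ ℝ^m_{>0}, then I is weakly dynamically non-emptiable. -/
open scoped BigOperators
open Matrix Filter

set_option maxHeartbeats 1000000
set_option synthInstance.maxHeartbeats 400000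

theorem aux_rank1 {m : ℕ} (S : Submodule ℝ (Fin m → ℝ)) (I : Set (Fin m))
    (F : Set (Fin m → ℝ)) (y : Fin m → ℝ)
    (hF : ∀ z ∈ F, (z - y ∈ S) ∧ ∀ l ∈ I, z l = y l)
    (hdim : Module.finrank ℝ (affineSpan ℝ F).direction = Module.finrank ℝ S - 1)
    (w' : Fin m → ℝ) (hw'S : w' ∈ S) (l₀ : Fin m) (hl₀ : l₀ ∈ I) (hw'l₀ : w' l₀ ≠ 0) :
    ∀ u ∈ S, ∃ c : ℝ, ∀ l ∈ I, u l = c * w' l := by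
  classical
  set π : (Fin m → ℝ) →ₗ[ℝ] (Fin m → ℝ) :=
    { toFun := fun x l => if l ∈ I then x l else 0
      map_add' := by intro x y; funext l; by_cases h : l ∈ I <;> simp [h]
      map_smul' := by intro c x; funext l; by_cases h : l ∈ I <;> simp [h] } with hπ
  have hπapp : ∀ (x : Fin m → ℝ) (l : Fin m), l ∈ I → π x l = x l := by
    intro x l hl; simp [hπ, hl]
  set f := π.domRestrict S with hf
  set S₀ : Submodule ℝ (Fin m → ℝ) := S ⊓ LinearMap.ker π with hS₀
  have hdir : (affineSpan ℝ F).direction ≤ S₀ := by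
    have hle : affineSpan ℝ F ≤ AffineSubspace.mk' y S₀ := by
      rw [affineSpan_le]
      intro z hz
      rw [SetLike.mem_coe, AffineSubspace.mem_mk', hS₀, Submodule.mem_inf]
      have hzy : z -ᵥ y = z - y := rfl
      rw [hzy]
      refine ⟨(hF z hz).1, ?_⟩
      rw [LinearMap.mem_ker]
      funext l
      by_cases hl : l ∈ I
      · have := (hF z hz).2 l hl
        simp [hπ, hl, this]
      · simp [hπ, hl]
    calc (affineSpan ℝ F).direction ≤ (AffineSubspace.mk' y S₀).direction :=
          AffineSubspace.direction_le hle
      _ = S₀ := AffineSubspace.direction_mk' y S₀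
  have hS₀ker : Module.finrank ℝ S₀ ≤ Module.finrank ℝ (LinearMap.ker f) := by
    have h1 : Submodule.comap S.subtype S₀ ≤ LinearMap.ker f := by
      intro u hu
      simp only [Submodule.mem_comap, hS₀, Submodule.mem_inf] at hu
      simp [hf, LinearMap.mem_ker, LinearMap.domRestrict_apply]
      exact hu.2
    have h2 : Module.finrank ℝ (Submodule.comap S.subtype S₀) = Module.finrank ℝ S₀ :=
      (Submodule.comapSubtypeEquivOfLe (inf_le_left : S₀ ≤ S)).finrank_eq
    rw [← h2]
    exact Submodule.finrank_mono h1
  have hrn : Module.finrank ℝ (LinearMap.range f) + Module.finrank ℝ (LinearMap.ker f)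
      = Module.finrank ℝ S := LinearMap.finrank_range_add_finrank_ker _
  have hπw' : π w' ≠ 0 := by
    intro h
    have := congrFun h l₀
    rw [hπapp w' l₀ hl₀] at this
    exact hw'l₀ this
  have hsp : Submodule.span ℝ {π w'} ≤ LinearMap.range f := by
    rw [Submodule.span_singleton_le_iff_mem]
    exact ⟨⟨w', hw'S⟩, rfl⟩
  have hr1 : 1 ≤ Module.finrank ℝ (LinearMap.range f) := by
    calc 1 = Module.finrank ℝ (Submodule.span ℝ {π w'}) := (finrank_span_singleton hπw').symm
      _ ≤ _ := Submodule.finrank_mono hsp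
  have hk1 : Module.finrank ℝ S - 1 ≤ Module.finrank ℝ (LinearMap.ker f) := by
    calc Module.finrank ℝ S - 1 = Module.finrank ℝ (affineSpan ℝ F).direction := hdim.symm
      _ ≤ Module.finrank ℝ S₀ := Submodule.finrank_mono hdir
      _ ≤ _ := hS₀ker
  have hreq : Module.finrank ℝ (LinearMap.range f) = 1 := by omega
  have hspan : LinearMap.range f = Submodule.span ℝ {π w'} :=
    (Submodule.eq_of_le_of_finrank_le hsp (by rw [hreq, finrank_span_singleton hπw'])).symm
  intro u hu
  have hm : π u ∈ LinearMap.range f := ⟨⟨u, hu⟩, rfl⟩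
  rw [hspan, Submodule.mem_span_singleton] at hm
  obtain ⟨c, hc⟩ := hm
  refine ⟨c, fun l hl => ?_⟩
  have := congrFun hc l
  rw [Pi.smul_apply, smul_eq_mul, hπapp u l hl, hπapp w' l hl] at this
  exact this.symm

/-- in a weakly reversible mass-action system, a semi-locking set `I` for which
`F_I` is a facet is weakly dynamically non-emptiable. -/
theorem stmt7 {m r : ℕ} (a b : Fin r → Fin m → ℕ) (k : Fin r → ℝ) (hk : ∀ i, 0 < k i)
    (hwr : WeaklyReversible a b)
    (I : Set (Fin m)) (hI : IsSemiLocking a b I)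
    (x₀ : Fin m → ℝ) (hx₀ : ∀ i, 0 < x₀ i)
    (hfacet : IsFacet a b (FI a b x₀ I)) :
    WeaklyDynNonEmptiable a b I := by
  classical
  obtain ⟨hIne, hsl⟩ := hI
  obtain ⟨hFne, hdim⟩ := hfacet
  obtain ⟨l₀, hl₀⟩ := hIne
  obtain ⟨y, hyC, hyL⟩ := hFne
  set S := stoichSubspace a b with hSdef
  have hclos : ∀ z ∈ closure (compatClass a b x₀), z - x₀ ∈ S := by
    have hsub : closure (compatClass a b x₀) ⊆ {x | x - x₀ ∈ S} := by
      apply closure_minimal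
      · intro x hx; exact hx.2
      · have heq : {x : Fin m → ℝ | x - x₀ ∈ S} = (fun x => x - x₀) ⁻¹' (S : Set (Fin m → ℝ)) := rfl
        rw [heq]
        exact (Submodule.closed_of_finiteDimensional S).preimage
          (continuous_id.sub continuous_const)
    exact fun z hz => hsub hz
  have hyS : y - x₀ ∈ S := hclos y hyC
  set w : Fin m → ℝ := fun l => x₀ l - y l with hwdef
  have hwS : w ∈ S := by
    have h1 := S.neg_mem hyS
    have h2 : w = -(y - x₀) := by funext l; simp [hwdef]
    rw [h2]; exact h1
  have hwI : ∀ l ∈ I, w l = x₀ l := by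
    intro l hl; simp [hwdef, hyL.2.1 l hl]
  have hwpos : ∀ l ∈ I, 0 < w l := by
    intro l hl; rw [hwI l hl]; exact hx₀ l
  have hrank : Matrix.rank (Gamma a b) = Module.finrank ℝ S := rfl
  have hK : ∀ u ∈ S, ∃ c : ℝ, ∀ l ∈ I, u l = c * w l := by
    apply aux_rank1 S I (FI a b x₀ I) y ?_ ?_ w hwS l₀ hl₀ (ne_of_gt (hwpos l₀ hl₀))
    · rintro z ⟨hzC, hzL⟩
      constructor
      · have h1 := hclos z hzC
        have h2 : z - y = (z - x₀) - (y - x₀) := by abel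
        rw [h2]; exact S.sub_mem h1 hyS
      · intro l hl
        rw [hzL.2.1 l hl, hyL.2.1 l hl]
    · rw [← hrank]; exact hdim
  -- finite index set, weight function
  set If : Finset (Fin m) := Finset.univ.filter (· ∈ I) with hIf
  have hIfmem : ∀ l, l ∈ If ↔ l ∈ I := by intro l; simp [hIf]
  set H : (Fin m → ℕ) → ℝ := fun yc => ∑ l ∈ If, w l * (yc l : ℝ) with hHdef
  set P : ℝ := ∑ l ∈ If, w l * w l with hPdef
  have hP : 0 < P := by
    rw [hPdef]
    apply Finset.sum_pos'
    · intro l hl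
      have := hwpos l ((hIfmem l).1 hl)
      nlinarith
    · exact ⟨l₀, (hIfmem l₀).2 hl₀, by nlinarith [hwpos l₀ hl₀]⟩
  have hHsub : ∀ yc zc : Fin m → ℕ,
      H zc - H yc = ∑ l ∈ If, w l * ((zc l : ℝ) - (yc l : ℝ)) := by
    intro yc zc
    rw [hHdef]
    rw [← Finset.sum_sub_distrib]
    apply Finset.sum_congr rfl
    intro l _
    ring
  have hHdiff : ∀ (yc zc : Fin m → ℕ) (cc : ℝ),
      (∀ l ∈ I, ((zc l : ℝ) - yc l) = cc * w l) → H zc - H yc = cc * P := by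
    intro yc zc cc hcc
    rw [hHsub yc zc, hPdef, Finset.mul_sum]
    apply Finset.sum_congr rfl
    intro l hl
    rw [hcc l ((hIfmem l).1 hl)]
    ring
  -- columns of Gamma
  have hcol : ∀ i, (fun l => ((b i l : ℝ) - (a i l : ℝ))) ∈ S := by
    intro i
    refine ⟨Pi.single i 1, ?_⟩
    show (Gamma a b).mulVec (Pi.single i 1) = _
    funext l
    simp [Matrix.mulVec_single, Gamma]
  choose c hc using fun i => hK _ (hcol i)
  have hHc : ∀ i, H (b i) - H (a i) = c i * P := fun i => hHdiff _ _ _ (hc i)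
  -- chains
  have hchain : ∀ yc zc : Fin m → ℕ,
      Relation.ReflTransGen (fun y z : Fin m → ℕ => ∃ i', a i' = y ∧ b i' = z) yc zc →
      ∃ cc : ℝ, ∀ l ∈ I, ((zc l : ℝ) - yc l) = cc * w l := by
    intro yc zc h
    induction h with
    | refl => exact ⟨0, fun l _ => by simp⟩
    | tail hab hbc ih =>
      obtain ⟨cc, hcc⟩ := ih
      obtain ⟨i', hai', hbi'⟩ := hbc
      refine ⟨cc + c i', fun l hl => ?_⟩
      have h1 := hcc l hl
      have h2 := hc i' l hl
      rw [hai'] at h2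
      rw [← hbi', add_mul]
      linarith
  have hup : ∀ yc zc : Fin m → ℕ,
      Relation.ReflTransGen (fun y z : Fin m → ℕ => ∃ i', a i' = y ∧ b i' = z) yc zc →
      H yc < H zc →
      ∃ j : Fin r, ∃ cc : ℝ, H (a j) < H (b j) ∧ 0 < cc ∧
        ∀ l ∈ I, ((zc l : ℝ) - a j l) = cc * w l := by
    intro yc zc h
    induction h using Relation.ReflTransGen.head_induction_on with
    | refl => intro hlt; exact absurd hlt (lt_irrefl _)
    | @head y1 u1 hstep htail ih =>
      intro hlt
      by_cases hyu : H y1 < H u1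
      · obtain ⟨i', hai', hbi'⟩ := hstep
        obtain ⟨cc, hcc⟩ := hchain y1 zc (Relation.ReflTransGen.head ⟨i', hai', hbi'⟩ htail)
        have hPP : H zc - H y1 = cc * P := hHdiff y1 zc cc hcc
        have hccpos : 0 < cc := by nlinarith
        refine ⟨i', cc, ?_, hccpos, ?_⟩
        · rw [hai', hbi']; exact hyu
        · rw [hai']; exact hcc
      · exact ih (by push_neg at hyu; linarith)
  -- the set J
  set J : Set (Fin r × Fin r) := {p | H (b p.1) < H (a p.1) ∧ H (a p.2) < H (b p.2) ∧
      ∃ cc : ℝ, 0 < cc ∧ ∀ l ∈ I, ((a p.1 l : ℝ) - a p.2 l) = cc * w l} with hJdef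
  have hJprec : J ⊆ precSet a I := by
    rintro ⟨p, q⟩ ⟨-, -, cc, hcc, hccl⟩
    have hlt : ∀ l ∈ I, a q l < a p l := by
      intro l hl
      have h1 := hccl l hl
      have h2 : (a q l : ℝ) < a p l := by nlinarith [hwpos l hl]
      exact_mod_cast h2
    exact ⟨fun l hl => le_of_lt (hlt l hl), l₀, hl₀, hlt l₀ hl₀⟩
  have hdownJ : ∀ i, H (b i) < H (a i) → ∃ j, (i, j) ∈ J := by
    intro i hi
    obtain ⟨j, cc, hj1, hcc, hccl⟩ := hup (b i) (a i) (hwr i) hi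
    exact ⟨j, hi, hj1, cc, hcc, hccl⟩
  set pos : Finset (Fin r) := Finset.univ.filter (fun j => H (a j) < H (b j)) with hposdef
  set C : ℝ := ∑ i, |H (b i) - H (a i)| with hCdef
  have hC0 : 0 ≤ C := Finset.sum_nonneg fun i _ => abs_nonneg _
  set δ : ℝ := if hne : pos.Nonempty then pos.inf' hne (fun j => H (b j) - H (a j)) else 1
    with hδdef
  have hδpos : 0 < δ := by
    rw [hδdef]
    split_ifs with hne
    · rw [Finset.lt_inf'_iff]
      intro j hj
      rw [hposdef, Finset.mem_filter] at hj
      linarith [hj.2]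
    · exact one_pos
  set ε : ℝ := δ / (2 * (C + 1)) with hεdef
  have hεpos : 0 < ε := by rw [hεdef]; positivity
  have hεC : ε * C < δ := by
    rw [hεdef, div_mul_eq_mul_div, div_lt_iff₀ (by positivity)]
    nlinarith
  refine ⟨ε, hεpos, J, hJprec, ?_⟩
  rintro v ⟨⟨hv0, hvcrit⟩, -, hvfeas⟩
  suffices hkey : ∀ i, v i = 0 ∨ H (b i) = H (a i) by
    refine ⟨hv0, ?_, ?_⟩
    · intro l hl
      show ∑ i, Gamma a b l i * v i = 0
      apply Finset.sum_eq_zero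
      intro i _
      rcases hkey i with h | h
      · rw [h, mul_zero]
      · have hc0 : c i * P = 0 := by rw [← hHc i, h]; ring
        have hci : c i = 0 := by
          rcases mul_eq_zero.1 hc0 with h' | h'
          · exact h'
          · exact absurd h' (ne_of_gt hP)
        have hg : Gamma a b l i = 0 := by
          have h2 := hc i l hl
          rw [hci, zero_mul] at h2
          simpa [Gamma] using h2
        rw [hg, zero_mul]
    · rintro ⟨p, q⟩ ⟨hp1, hq1, -⟩
      have hvp : v p = 0 := by
        rcases hkey p with h | h
        · exact h
        · rw [h] at hp1; exact absurd hp1 (lt_irrefl _)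
      have hvq : v q = 0 := by
        rcases hkey q with h | h
        · exact h
        · rw [h] at hq1; exact absurd hq1 (lt_irrefl _)
      show v p = ε * v q
      rw [hvp, hvq, mul_zero]
  by_cases hpos : pos.Nonempty
  · -- main case
    have hδ : δ = pos.inf' hpos (fun j => H (b j) - H (a j)) := by
      rw [hδdef]; exact dif_pos hpos
    have hδle : ∀ j ∈ pos, δ ≤ H (b j) - H (a j) := by
      intro j hj; rw [hδ]; exact Finset.inf'_le _ hj
    set Mup : ℝ := ∑ j ∈ pos, v j with hMdef
    have hM0 : 0 ≤ Mup := Finset.sum_nonneg fun j _ => hv0 j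
    have hvleM : ∀ j ∈ pos, v j ≤ Mup := by
      intro j hj
      exact Finset.single_le_sum (fun i _ => hv0 i) hj
    set T : ℝ := ∑ i, v i * (H (b i) - H (a i)) with hTdef
    have hT0 : T ≤ 0 := by
      have heq : T = ∑ l ∈ If, w l * ((Gamma a b).mulVec v l) := by
        rw [hTdef]
        have hterm : ∀ i : Fin r, v i * (H (b i) - H (a i))
            = ∑ l ∈ If, w l * (((b i l : ℝ) - a i l) * v i) := by
          intro i
          rw [hHsub (a i) (b i), Finset.mul_sum]
          apply Finset.sum_congr rfl
          intro l _
          ring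
        rw [Finset.sum_congr rfl (fun i _ => hterm i), Finset.sum_comm]
        apply Finset.sum_congr rfl
        intro l _
        rw [Matrix.mulVec, dotProduct, Finset.mul_sum]
        apply Finset.sum_congr rfl
        intro i _
        show w l * (((b i l : ℝ) - a i l) * v i) = w l * (Gamma a b l i * v i)
        rfl
      rw [heq]
      apply Finset.sum_nonpos
      intro l hl
      have hl' : l ∈ I := (hIfmem l).1 hl
      exact mul_nonpos_of_nonneg_of_nonpos (le_of_lt (hwpos l hl')) (hvcrit l hl')
    have hTlow : δ * Mup - ε * Mup * C ≤ T := by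
      have hsplit : ∑ i ∈ pos, v i * (H (b i) - H (a i))
          + ∑ i ∈ Finset.univ.filter (fun i => ¬ (H (a i) < H (b i))),
              v i * (H (b i) - H (a i)) = T := by
        rw [hTdef, hposdef]
        exact Finset.sum_filter_add_sum_filter_not _ _ _
      have h1 : δ * Mup ≤ ∑ i ∈ pos, v i * (H (b i) - H (a i)) := by
        rw [hMdef, Finset.mul_sum]
        apply Finset.sum_le_sum
        intro j hj
        have h2 := hδle j hj
        nlinarith [hv0 j]
      have h2 : -(ε * Mup * C)
          ≤ ∑ i ∈ Finset.univ.filter (fun i => ¬ (H (a i) < H (b i))),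
              v i * (H (b i) - H (a i)) := by
        have hterm : ∀ i ∈ Finset.univ.filter (fun i => ¬ (H (a i) < H (b i))),
            -(ε * Mup * |H (b i) - H (a i)|) ≤ v i * (H (b i) - H (a i)) := by
          intro i hi
          rw [Finset.mem_filter] at hi
          have hile : H (b i) ≤ H (a i) := le_of_not_gt hi.2
          rcases eq_or_lt_of_le hile with heq | hltd
          · rw [heq]
            simp
          · obtain ⟨j, hij⟩ := hdownJ i hltd
            have hvi : v i ≤ ε * v j := hvfeas _ hij
            have hjpos : j ∈ pos := by
              rw [hposdef, Finset.mem_filter]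
              exact ⟨Finset.mem_univ j, hij.2.1⟩
            have hvj : v j ≤ Mup := hvleM j hjpos
            have habs : |H (b i) - H (a i)| = -(H (b i) - H (a i)) := abs_of_neg (by linarith)
            rw [habs]
            have hviM : v i ≤ ε * Mup :=
              le_trans hvi (mul_le_mul_of_nonneg_left hvj hεpos.le)
            nlinarith [mul_nonneg (sub_nonneg.2 hviM)
              (by linarith : (0:ℝ) ≤ H (a i) - H (b i))]
        have hsum1 : ∑ i ∈ Finset.univ.filter (fun i => ¬ (H (a i) < H (b i))),
            -(ε * Mup * |H (b i) - H (a i)|)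
            = -(ε * Mup * ∑ i ∈ Finset.univ.filter (fun i => ¬ (H (a i) < H (b i))),
                |H (b i) - H (a i)|) := by
          rw [Finset.sum_neg_distrib, ← Finset.mul_sum]
        have hsum2 : ∑ i ∈ Finset.univ.filter (fun i => ¬ (H (a i) < H (b i))),
            |H (b i) - H (a i)| ≤ C := by
          rw [hCdef]
          apply Finset.sum_le_sum_of_subset_of_nonneg (Finset.filter_subset _ _)
          intro i _ _
          exact abs_nonneg _
        calc -(ε * Mup * C) ≤ -(ε * Mup * ∑ i ∈ Finset.univ.filter
                (fun i => ¬ (H (a i) < H (b i))), |H (b i) - H (a i)|) := by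
              have : 0 ≤ ε * Mup := by positivity
              nlinarith
          _ = _ := hsum1.symm
          _ ≤ _ := Finset.sum_le_sum hterm
      linarith [hsplit, h1, h2]
    have hMz : Mup = 0 := by nlinarith
    have hposz : ∀ j ∈ pos, v j = 0 := by
      intro j hj
      have := (Finset.sum_eq_zero_iff_of_nonneg (fun i _ => hv0 i)).1 hMz j hj
      exact this
    intro i
    rcases lt_trichotomy (H (b i)) (H (a i)) with h | h | h
    · left
      obtain ⟨j, hij⟩ := hdownJ i h
      have hvi : v i ≤ ε * v j := hvfeas _ hij
      have hjpos : j ∈ pos := by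
        rw [hposdef, Finset.mem_filter]
        exact ⟨Finset.mem_univ j, hij.2.1⟩
      have := hposz j hjpos
      have hle : v i ≤ 0 := by rw [this] at hvi; linarith
      linarith [hv0 i, hle]
    · right; exact h
    · left
      apply hposz
      rw [hposdef, Finset.mem_filter]
      exact ⟨Finset.mem_univ i, h⟩
  · -- no up reactions at all
    intro i
    right
    rcases lt_trichotomy (H (b i)) (H (a i)) with h | h | h
    · obtain ⟨j, hij⟩ := hdownJ i h
      exfalso
      apply hpos
      refine ⟨j, ?_⟩
      rw [hposdef, Finset.mem_filter]
      exact ⟨Finset.mem_univ j, hij.2.1⟩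
    · exact h
    · exfalso
      apply hpos
      refine ⟨i, ?_⟩
      rw [hposdef, Finset.mem_filter]
      exact ⟨Finset.mem_univ i, h⟩
end

section
/- Let I ⊆ {1,…,m} be nonempty and suppose F̃_I = (x̃₀ + S) ∩ L_I ≠ ∅ for some x̃₀ ∈ ℝ^m_{>0}. Then: (1) for every x₀ ∈ ℝ^m_{>0}, the set F_I = (x₀ + S) ∩ L_I is either empty or has affine-hull dimension equal to that of F̃_I; and (2) for every x ∈ L_I there exists x₀ ∈ ℝ^m_{>0} such that x ∈ (x₀ + S) ∩ L_I. -/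
open scoped BigOperators
open Matrix Filter

/-- `(x₀ + S) ∩ L_I`. -/
def FIaff {m r : ℕ} (a b : Fin r → Fin m → ℕ) (x₀ : Fin m → ℝ) (I : Set (Fin m)) :
    Set (Fin m → ℝ) :=
  {x | x - x₀ ∈ stoichSubspace a b} ∩ LI I

private lemma eps_lemma {m : ℕ} (z w : Fin m → ℝ) :
    ∃ ε > (0:ℝ), ∀ i, 0 < z i → 0 < z i + ε * w i := by
  rcases isEmpty_or_nonempty (Fin m) with h | h
  · exact ⟨1, one_pos, fun i => (h.false i).elim⟩
  · classical
    set δ : Fin m → ℝ := fun i => if 0 < z i then z i / (|w i| + 1) else 1 with hδ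
    have hδpos : ∀ i, 0 < δ i := by
      intro i; by_cases hzi : 0 < z i <;> simp only [δ, hzi, if_true, if_false]
      · exact div_pos hzi (by positivity)
      · exact one_pos
    obtain ⟨i0, -, hi0⟩ := Finset.exists_min_image Finset.univ δ ⟨h.some, Finset.mem_univ _⟩
    refine ⟨δ i0, hδpos i0, fun i hzi => ?_⟩
    have h1 : δ i0 ≤ z i / (|w i| + 1) := by
      have := hi0 i (Finset.mem_univ i); simpa [δ, hzi] using this
    have h2 : δ i0 * |w i| < z i := by
      calc δ i0 * |w i| ≤ (z i / (|w i| + 1)) * |w i| :=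
            mul_le_mul_of_nonneg_right h1 (abs_nonneg _)
        _ < z i := by
            rw [div_mul_eq_mul_div, div_lt_iff₀ (by positivity)]
            nlinarith [abs_nonneg (w i)]
    nlinarith [mul_le_mul_of_nonneg_left (neg_abs_le (w i)) (le_of_lt (hδpos i0))]

private def VI {m : ℕ} (I : Set (Fin m)) : Submodule ℝ (Fin m → ℝ) where
  carrier := {x | ∀ i ∈ I, x i = 0}
  add_mem' := fun hx hy i hi => by simp only [Pi.add_apply, hx i hi, hy i hi, add_zero]
  zero_mem' := fun i _ => rfl
  smul_mem' := fun c x hx i hi => by simp only [Pi.smul_apply, hx i hi, smul_zero]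

private lemma dir_eq {m r : ℕ} (a b : Fin r → Fin m → ℕ) (I : Set (Fin m))
    (x₀ z : Fin m → ℝ) (hz : z ∈ FIaff a b x₀ I) :
    (affineSpan ℝ (FIaff a b x₀ I)).direction = stoichSubspace a b ⊓ VI I := by
  obtain ⟨hzS, hznn, hzI, hzpos⟩ := hz
  apply le_antisymm
  · have hsub : FIaff a b x₀ I ⊆
        (AffineSubspace.mk' z (stoichSubspace a b ⊓ VI I) : Set (Fin m → ℝ)) := by
      rintro x ⟨hxS, hxnn, hxI, hxpos⟩
      refine AffineSubspace.mem_mk'.mpr ⟨?_, ?_⟩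
      · have : x -ᵥ z = (x - x₀) - (z - x₀) := by
          rw [vsub_eq_sub]; abel
        rw [this]
        exact Submodule.sub_mem _ hxS hzS
      · intro i hi
        simp [vsub_eq_sub, hxI i hi, hzI i hi]
    calc (affineSpan ℝ (FIaff a b x₀ I)).direction
        ≤ (AffineSubspace.mk' z (stoichSubspace a b ⊓ VI I)).direction :=
          AffineSubspace.direction_le (affineSpan_le.mpr hsub)
      _ = stoichSubspace a b ⊓ VI I := AffineSubspace.direction_mk' _ _
  · rintro w ⟨hwS, hwV⟩
    obtain ⟨ε, hε, hεw⟩ := eps_lemma z w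
    have hmem : z + ε • w ∈ FIaff a b x₀ I := by
      refine ⟨?_, ?_, ?_, ?_⟩
      · have : z + ε • w - x₀ = (z - x₀) + ε • w := by abel
        rw [Set.mem_setOf_eq, this]
        exact Submodule.add_mem _ hzS (Submodule.smul_mem _ _ hwS)
      · intro i
        by_cases hi : i ∈ I
        · simp [hzI i hi, hwV i hi]
        · exact le_of_lt (hεw i (hzpos i hi))
      · intro i hi; simp [hzI i hi, hwV i hi]
      · intro i hi; exact hεw i (hzpos i hi)
    have hv : (z + ε • w) -ᵥ z ∈ (affineSpan ℝ (FIaff a b x₀ I)).direction :=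
      AffineSubspace.vsub_mem_direction (subset_affineSpan ℝ _ hmem)
        (subset_affineSpan ℝ _ ⟨hzS, hznn, hzI, hzpos⟩)
    have heq : (z + ε • w) -ᵥ z = ε • w := by simp [vsub_eq_sub]
    rw [heq] at hv
    have := Submodule.smul_mem _ ε⁻¹ hv
    rwa [smul_smul, inv_mul_cancel₀ (ne_of_gt hε), one_smul] at this

/-- if `(x̃₀ + S) ∩ L_I ≠ ∅` for some positive `x̃₀`, then for every positive
`x₀` the set `(x₀ + S) ∩ L_I` is empty or has the same affine-hull dimension, and every
point of `L_I` lies in `(x₀ + S) ∩ L_I` for some positive `x₀`. -/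
theorem stmt11 {m r : ℕ} (a b : Fin r → Fin m → ℕ)
    (I : Set (Fin m)) (hInonempty : I.Nonempty)
    (xt : Fin m → ℝ) (hxt : ∀ i, 0 < xt i) (hne : (FIaff a b xt I).Nonempty) :
    (∀ x₀ : Fin m → ℝ, (∀ i, 0 < x₀ i) →
       FIaff a b x₀ I = ∅ ∨ setDim (FIaff a b x₀ I) = setDim (FIaff a b xt I)) ∧
    (∀ x ∈ LI I, ∃ x₀ : Fin m → ℝ, (∀ i, 0 < x₀ i) ∧ x ∈ FIaff a b x₀ I) := by
  obtain ⟨y, hy⟩ := hne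
  constructor
  · intro x₀ _
    rcases Set.eq_empty_or_nonempty (FIaff a b x₀ I) with h | ⟨z, hz⟩
    · exact Or.inl h
    · right
      unfold setDim
      rw [dir_eq a b I x₀ z hz, dir_eq a b I xt y hy]
  · intro x hx
    obtain ⟨hyS, hynn, hyI, hypos⟩ := hy
    obtain ⟨hxnn, hxI, hxpos⟩ := hx
    set d : Fin m → ℝ := xt - y with hd
    have hdS : d ∈ stoichSubspace a b := by
      have : d = -(y - xt) := by rw [hd]; abel
      rw [this]
      exact Submodule.neg_mem _ hyS
    obtain ⟨ε, hε, hεd⟩ := eps_lemma x d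
    refine ⟨x + ε • d, fun i => ?_, ?_, hxnn, hxI, hxpos⟩
    · by_cases hi : i ∈ I
      · have : (x + ε • d) i = ε * xt i := by
          simp [hd, hxI i hi, hyI i hi]
        rw [this]
        exact mul_pos hε (hxt i)
      · exact hεd i (hxpos i hi)
    · have : x - (x + ε • d) = (-ε) • d := by
        rw [neg_smul]; abel
      rw [Set.mem_setOf_eq, this]
      exact Submodule.smul_mem _ _ hdS
end

section
/- Let I ⊆ {1,…,m} be a semi-locking set and let x(t) ∈ ℝ^m_{≥0} be a forward solution of the mass-action system ẋ = Γ R(x) with x_i(0) = 0 for all i ∈ I. Then x_i(t) = 0 for all t ≥ 0 and all i ∈ I. -/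
open scoped BigOperators
open Matrix Filter

lemma prod_pow_le_aux {m : ℕ} (xv : Fin m → ℝ) (M : ℝ) (hM : 1 ≤ M)
    (hx : ∀ j, 0 ≤ xv j) (hxM : ∀ j, xv j ≤ M) (α : Fin m → ℕ) (l : Fin m) (hl : 0 < α l) :
    ∏ j, xv j ^ α j ≤ M ^ (∑ j, α j) * xv l := by
  have hM0 : (0:ℝ) ≤ M := le_trans zero_le_one hM
  have h1 : ∏ j, xv j ^ α j = xv l ^ α l * ∏ j ∈ Finset.univ.erase l, xv j ^ α j :=
    (Finset.mul_prod_erase Finset.univ _ (Finset.mem_univ l)).symm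
  have e1 : xv l ^ α l = xv l ^ (α l - 1) * xv l := by
    rw [← pow_succ, Nat.sub_add_cancel hl]
  have b1 : xv l ^ (α l - 1) ≤ M ^ (α l - 1) := pow_le_pow_left₀ (hx l) (hxM l) _
  have b2 : ∏ j ∈ Finset.univ.erase l, xv j ^ α j ≤ M ^ (∑ j ∈ Finset.univ.erase l, α j) := by
    rw [← Finset.prod_pow_eq_pow_sum]
    exact Finset.prod_le_prod (fun j _ => pow_nonneg (hx j) _)
      (fun j _ => pow_le_pow_left₀ (hx j) (hxM j) _)
  have hprodnn : (0:ℝ) ≤ ∏ j ∈ Finset.univ.erase l, xv j ^ α j :=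
    Finset.prod_nonneg fun j _ => pow_nonneg (hx j) _
  have hsum : (α l - 1) + ∑ j ∈ Finset.univ.erase l, α j ≤ ∑ j, α j := by
    have h := Finset.add_sum_erase Finset.univ α (Finset.mem_univ l)
    omega
  calc ∏ j, xv j ^ α j
      = (xv l ^ (α l - 1) * ∏ j ∈ Finset.univ.erase l, xv j ^ α j) * xv l := by
        rw [h1, e1]; ring
    _ ≤ (M ^ (α l - 1) * M ^ (∑ j ∈ Finset.univ.erase l, α j)) * xv l := by
        apply mul_le_mul_of_nonneg_right _ (hx l)
        exact mul_le_mul b1 b2 hprodnn (pow_nonneg hM0 _)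
    _ = M ^ ((α l - 1) + ∑ j ∈ Finset.univ.erase l, α j) * xv l := by rw [pow_add]
    _ ≤ M ^ (∑ j, α j) * xv l :=
        mul_le_mul_of_nonneg_right (pow_le_pow_right₀ hM hsum) (hx l)


/-- if `I` is a semi-locking set and a forward solution in `ℝ^m_{≥0}` has
`x_i(0) = 0` for all `i ∈ I`, then `x_i(t) = 0` for all `t ≥ 0` and all `i ∈ I`. -/
theorem stmt14 {m r : ℕ} (a b : Fin r → Fin m → ℕ) (k : Fin r → ℝ) (hk : ∀ i, 0 < k i)
    (I : Set (Fin m)) (hI : IsSemiLocking a b I)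
    (x : ℝ → Fin m → ℝ) (hsol : IsForwardSolution a b k x)
    (hnonneg : ∀ t : ℝ, 0 ≤ t → ∀ i, 0 ≤ x t i)
    (hzero : ∀ i ∈ I, x 0 i = 0) :
    ∀ t : ℝ, 0 ≤ t → ∀ i ∈ I, x t i = 0 := by
    classical
  set S : Finset (Fin m) := Finset.univ.filter (· ∈ I) with hS
  have hmemS : ∀ j, j ∈ S ↔ j ∈ I := by intro j; simp [hS]
  set y : ℝ → ℝ := fun t => ∑ j ∈ S, x t j with hy
  have hy0 : y 0 = 0 := Finset.sum_eq_zero fun j hj => hzero j ((hmemS j).1 hj)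
  have hynn : ∀ t, 0 ≤ t → 0 ≤ y t := fun t ht => Finset.sum_nonneg fun j _ => hnonneg t ht j
  have key : ∀ T, 0 ≤ T → y T = 0 := by
    intro T hT
    have hcont : ContinuousOn x (Set.Icc 0 T) := fun t ht =>
      ((hsol t ht.1).continuousAt).continuousWithinAt
    obtain ⟨C, hC⟩ := (isCompact_Icc).exists_bound_of_continuousOn hcont
    set M : ℝ := max C 1 with hM
    have hM1 : (1:ℝ) ≤ M := le_max_right _ _
    have hxM : ∀ t ∈ Set.Icc (0:ℝ) T, ∀ j, x t j ≤ M := by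
      intro t ht j
      calc x t j ≤ |x t j| := le_abs_self _
        _ = ‖x t j‖ := rfl
        _ ≤ ‖x t‖ := norm_le_pi_norm _ j
        _ ≤ C := hC t ht
        _ ≤ M := le_max_left _ _
    set c : Fin r → ℝ := fun i => ∑ j ∈ S, Gamma a b j i with hc
    set N : Fin r → ℕ := fun i => ∑ j, a i j with hN
    set K : ℝ := ∑ i, |c i| * (k i * M ^ N i) with hK
    set g : ℝ → ℝ := fun s => ∑ j ∈ S, ((Gamma a b).mulVec (rate a k (x s))) j with hg
    have hyderiv : ∀ s ∈ Set.Icc (0:ℝ) T, HasDerivAt y (g s) s := by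
      intro s hs
      exact HasDerivAt.fun_sum fun j _ => (hasDerivAt_pi.1 (hsol s hs.1)) j
    have hgform : ∀ s, g s = ∑ i, c i * rate a k (x s) i := by
      intro s
      simp only [hg, Matrix.mulVec, dotProduct]
      rw [Finset.sum_comm]
      exact Finset.sum_congr rfl fun i _ => (Finset.sum_mul _ _ _).symm
    have hbound : ∀ s ∈ Set.Ico (0:ℝ) T, ‖g s‖ ≤ K * ‖y s‖ + 0 := by
      intro s hs
      have hsIcc : s ∈ Set.Icc (0:ℝ) T := ⟨hs.1, le_of_lt hs.2⟩
      have hxnn : ∀ j, 0 ≤ x s j := hnonneg s hs.1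
      have hRnn : ∀ i, 0 ≤ rate a k (x s) i := fun i =>
        mul_nonneg (le_of_lt (hk i)) (Finset.prod_nonneg fun j _ => pow_nonneg (hxnn j) _)
      have hterm : ∀ i, |c i * rate a k (x s) i| ≤ (|c i| * (k i * M ^ N i)) * y s := by
        intro i
        by_cases hP : ∃ l ∈ I, 0 < a i l
        · obtain ⟨l, hlI, hla⟩ := hP
          have hxly : x s l ≤ y s :=
            Finset.single_le_sum (fun j _ => hxnn j) ((hmemS l).2 hlI)
          have hR : rate a k (x s) i ≤ k i * M ^ N i * y s := by
            have := prod_pow_le_aux (x s) M hM1 hxnn (hxM s hsIcc) (a i) l hla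
            calc rate a k (x s) i = k i * ∏ j, x s j ^ a i j := rfl
              _ ≤ k i * (M ^ N i * x s l) :=
                  mul_le_mul_of_nonneg_left this (le_of_lt (hk i))
              _ = k i * M ^ N i * x s l := by ring
              _ ≤ k i * M ^ N i * y s := by
                  apply mul_le_mul_of_nonneg_left hxly
                  exact mul_nonneg (le_of_lt (hk i)) (pow_nonneg (le_trans zero_le_one hM1) _)
          calc |c i * rate a k (x s) i| = |c i| * rate a k (x s) i := by
                rw [abs_mul, abs_of_nonneg (hRnn i)]
            _ ≤ |c i| * (k i * M ^ N i * y s) :=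
                mul_le_mul_of_nonneg_left hR (abs_nonneg _)
            _ = (|c i| * (k i * M ^ N i)) * y s := by ring
        · have hc0 : c i = 0 := by
            apply Finset.sum_eq_zero
            intro j hj
            have hjI : j ∈ I := (hmemS j).1 hj
            have ha0 : a i j = 0 := by
              by_contra h
              exact hP ⟨j, hjI, Nat.pos_of_ne_zero h⟩
            have hb0 : b i j = 0 := by
              by_contra h
              exact hP (hI.2 i ⟨j, hjI, Nat.pos_of_ne_zero h⟩)
            simp [Gamma, ha0, hb0]
          rw [hc0]
          simp only [zero_mul, abs_zero]
          exact le_refl 0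
      calc ‖g s‖ = |∑ i, c i * rate a k (x s) i| := by rw [hgform]; rfl
        _ ≤ ∑ i, |c i * rate a k (x s) i| := Finset.abs_sum_le_sum_abs _ _
        _ ≤ ∑ i, (|c i| * (k i * M ^ N i)) * y s := Finset.sum_le_sum fun i _ => hterm i
        _ = K * y s := by rw [hK, Finset.sum_mul]
        _ = K * ‖y s‖ := by rw [Real.norm_of_nonneg (hynn s hs.1)]
        _ ≤ K * ‖y s‖ + 0 := le_of_eq (add_zero _).symm
    have hycont : ContinuousOn y (Set.Icc 0 T) := fun t ht =>
      ((hyderiv t ht).continuousAt).continuousWithinAt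
    have := norm_le_gronwallBound_of_norm_deriv_right_le hycont
      (fun s hs => (hyderiv s ⟨hs.1, le_of_lt hs.2⟩).hasDerivWithinAt)
      (show ‖y 0‖ ≤ (0:ℝ) by simp [hy0]) hbound T ⟨hT, le_refl T⟩
    rw [gronwallBound_ε0_δ0] at this
    have := le_antisymm (le_trans (le_abs_self _) this) (hynn T hT)
    exact this
  intro t ht i hiI
  have hyt := key t ht
  have := (Finset.sum_eq_zero_iff_of_nonneg (fun j _ => hnonneg t ht j)).1 hyt
  exact this i ((hmemS i).2 hiI)
end

section
/- Let A ∈ ℝ^{m×n}. Then exactly one of the following two conditions holds: (1) there exists x ∈ ℝ^n_{≥0} with x ∉ ker(A) such that Ax ≤ 0 (componentwise); (2) there exists y ∈ ℝ^m_{>0} such that Aᵀy ≥ 0 (componentwise). -/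
open Finset

/-- Conic Carathéodory: any nonnegative combination can be rewritten with linearly
independent support. -/
lemma conic_caratheodory {E : Type*} [AddCommGroup E] [Module ℝ E]
    {ι : Type*} [Fintype ι] [DecidableEq ι] (v : ι → E) :
    ∀ (N : ℕ) (c : ι → ℝ), (Finset.univ.filter fun i => c i ≠ 0).card ≤ N → (∀ i, 0 ≤ c i) →
    ∃ c' : ι → ℝ, (∀ i, 0 ≤ c' i) ∧
      (∑ i, c' i • v i = ∑ i, c i • v i) ∧
      LinearIndependent ℝ (fun i : {i // c' i ≠ 0} => v i) := by
  intro N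
  induction N with
  | zero =>
    intro c hcard hc
    have hall : ∀ i, c i = 0 := by
      intro i
      by_contra h
      have : i ∈ Finset.univ.filter fun i => c i ≠ 0 := by simp [h]
      have := Finset.card_pos.mpr ⟨i, this⟩
      omega
    refine ⟨c, hc, rfl, ?_⟩
    haveI : IsEmpty {i // c i ≠ 0} := ⟨fun ⟨i, hi⟩ => hi (hall i)⟩
    exact linearIndependent_empty_type
  | succ N ih =>
    intro c hcard hc
    by_cases hli : LinearIndependent ℝ (fun i : {i // c i ≠ 0} => v i)
    · exact ⟨c, hc, rfl, hli⟩
    · obtain ⟨g, hgsum, i₀, hgi₀⟩ := Fintype.not_linearIndependent_iff.mp hli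
      -- extend g to a vector d on ι supported in the support of c, with ∑ d • v = 0
      -- and some positive entry
      obtain ⟨d, hdsupp, hdsum, i₁, hdi₁⟩ :
          ∃ d : ι → ℝ, (∀ i, d i ≠ 0 → c i ≠ 0) ∧ (∑ i, d i • v i = 0) ∧ ∃ i, 0 < d i := by
        set d : ι → ℝ := fun i => if h : c i ≠ 0 then g ⟨i, h⟩ else 0 with hd
        have hdsupp : ∀ i, d i ≠ 0 → c i ≠ 0 := by
          intro i hdi
          by_contra h
          simp [hd, h] at hdi
        have hdsum : ∑ i, d i • v i = 0 := by
          have h1 : ∑ i, d i • v i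
              = ∑ i ∈ Finset.univ.filter (fun i => c i ≠ 0), d i • v i := by
            refine (Finset.sum_filter_of_ne ?_).symm
            intro i _ h
            exact hdsupp i (fun h0 => h (by simp [h0]))
          have h2 : ∑ i ∈ Finset.univ.filter (fun i => c i ≠ 0), d i • v i
              = ∑ i : {i // c i ≠ 0}, d i.1 • v i.1 := by
            exact Finset.sum_subtype _ (by simp) _
          rw [h1, h2, ← hgsum]
          refine Finset.sum_congr rfl ?_
          rintro ⟨i, hi⟩ _
          simp [hd, hi]
        rcases lt_or_gt_of_ne hgi₀ with hneg | hpos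
        · refine ⟨-d, ?_, by simpa using hdsum, i₀.1, ?_⟩
          · intro i hi; exact hdsupp i (by simpa using hi)
          · simp only [Pi.neg_apply, hd, i₀.2, dif_pos, not_true]
            rw [dif_pos i₀.2]
            simpa using hneg
        · refine ⟨d, hdsupp, hdsum, i₀.1, ?_⟩
          rw [hd]; simpa [dif_pos i₀.2] using hpos
      -- take the largest t with c - t d ≥ 0
      set P : Finset ι := Finset.univ.filter fun i => 0 < d i with hP
      have hPne : P.Nonempty := ⟨i₁, by simp [hP, hdi₁]⟩
      set t : ℝ := P.inf' hPne (fun i => c i / d i) with ht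
      have ht0 : 0 ≤ t := by
        rw [ht]
        apply Finset.le_inf'
        intro i hi
        have hdi : 0 < d i := by simpa [hP] using hi
        exact div_nonneg (hc i) hdi.le
      obtain ⟨j, hjP, hjt⟩ := Finset.exists_mem_eq_inf' hPne (fun i => c i / d i)
      have hdj : 0 < d j := by simpa [hP] using hjP
      set c' : ι → ℝ := fun i => c i - t * d i with hc'
      have hc'0 : ∀ i, 0 ≤ c' i := by
        intro i
        rw [hc']
        dsimp only
        rcases le_or_gt (d i) 0 with hdi | hdi
        · nlinarith [hc i]
        · have : t ≤ c i / d i := Finset.inf'_le _ (by simp [hP, hdi])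
          rw [le_div_iff₀ hdi] at this
          linarith
      have hc'supp : ∀ i, c' i ≠ 0 → c i ≠ 0 := by
        intro i hi h0
        have : d i = 0 := by
          by_contra hd0
          exact (hdsupp i hd0) h0
        rw [hc'] at hi
        simp [h0, this] at hi
      have hc'sum : ∑ i, c' i • v i = ∑ i, c i • v i := by
        simp only [hc', sub_smul, Finset.sum_sub_distrib, mul_smul]
        rw [← Finset.smul_sum, hdsum, smul_zero, sub_zero]
      have hc'j : c' j = 0 := by
        rw [hc']
        dsimp only
        rw [ht, hjt]
        field_simp
        ring
      have hsubset : (Finset.univ.filter fun i => c' i ≠ 0)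
          ⊂ Finset.univ.filter fun i => c i ≠ 0 := by
        refine Finset.ssubset_iff_of_subset ?_ |>.mpr ?_
        · intro i hi
          simp only [Finset.mem_filter, Finset.mem_univ, true_and] at hi ⊢
          exact hc'supp i hi
        · refine ⟨j, ?_, ?_⟩
          · simp only [Finset.mem_filter, Finset.mem_univ, true_and]
            exact hdsupp j hdj.ne'
          · simp [hc'j]
      have hcard' : (Finset.univ.filter fun i => c' i ≠ 0).card ≤ N := by
        have := Finset.card_lt_card hsubset
        omega
      obtain ⟨c'', h1, h2, h3⟩ := ih c' hcard' hc'0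
      exact ⟨c'', h1, h2.trans hc'sum, h3⟩

/-- A finitely generated cone in a finite-dimensional normed space is closed. -/
lemma cone_isClosed {E : Type*} [NormedAddCommGroup E] [NormedSpace ℝ E]
    [FiniteDimensional ℝ E] {ι : Type*} [Fintype ι] [DecidableEq ι] (v : ι → E) :
    IsClosed {z : E | ∃ c : ι → ℝ, (∀ i, 0 ≤ c i) ∧ ∑ i, c i • v i = z} := by
  classical
  have hset : {z : E | ∃ c : ι → ℝ, (∀ i, 0 ≤ c i) ∧ ∑ i, c i • v i = z}
      = ⋃ s : Finset ι, {z : E | LinearIndependent ℝ (fun i : s => v i) ∧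
          ∃ c : ι → ℝ, (∀ i, 0 ≤ c i) ∧ (∀ i, i ∉ s → c i = 0) ∧ ∑ i, c i • v i = z} := by
    ext z
    simp only [Set.mem_setOf_eq, Set.mem_iUnion]
    constructor
    · rintro ⟨c, hc, hz⟩
      obtain ⟨c', hc'0, hc'sum, hc'li⟩ :=
        conic_caratheodory v (Finset.univ.filter fun i => c i ≠ 0).card c le_rfl hc
      refine ⟨Finset.univ.filter fun i => c' i ≠ 0, ?_, c', hc'0, ?_, hc'sum.trans hz⟩
      · show LinearIndependent ℝ
            (fun i : (Finset.univ.filter fun i => c' i ≠ 0 : Finset ι) => v i)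
        exact hc'li.comp
          (fun i : (Finset.univ.filter fun i => c' i ≠ 0 : Finset ι) =>
            (⟨i.1, (Finset.mem_filter.mp i.2).2⟩ : {i // c' i ≠ 0}))
          (by intro a b hab; have h2 := congrArg Subtype.val hab; exact Subtype.ext h2)
      · intro i hi
        by_contra h
        exact hi (by simp [h])
    · rintro ⟨s, _, c, hc, _, hz⟩
      exact ⟨c, hc, hz⟩
  rw [hset]
  apply isClosed_iUnion_of_finite
  intro s
  by_cases hli : LinearIndependent ℝ (fun i : s => v i)
  · have himg : {z : E | LinearIndependent ℝ (fun i : s => v i) ∧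
        ∃ c : ι → ℝ, (∀ i, 0 ≤ c i) ∧ (∀ i, i ∉ s → c i = 0) ∧ ∑ i, c i • v i = z}
        = (Fintype.linearCombination ℝ (fun i : s => v i)) '' {c : s → ℝ | ∀ i, 0 ≤ c i} := by
      ext z
      simp only [Set.mem_setOf_eq, Set.mem_image, Fintype.linearCombination_apply]
      constructor
      · rintro ⟨-, c, hc, hcs, hz⟩
        refine ⟨fun i => c i, fun i => hc i, ?_⟩
        have h1 : ∑ i : s, c (i : ι) • v (i : ι) = ∑ i ∈ s, c i • v i :=
          Finset.sum_coe_sort s (fun i => c i • v i)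
        have h2 : ∑ i ∈ s, c i • v i = ∑ i : ι, c i • v i :=
          Finset.sum_subset (Finset.subset_univ s)
            (fun i _ hi => by rw [hcs i hi, zero_smul])
        rw [h1, h2, hz]
      · rintro ⟨c₀, hc₀, hz⟩
        refine ⟨hli, fun i => if h : i ∈ s then c₀ ⟨i, h⟩ else 0, ?_, ?_, ?_⟩
        · intro i
          by_cases h : i ∈ s <;> simp [h, hc₀]
        · intro i hi; simp [hi]
        · have h1 : ∑ i : ι, (if h : i ∈ s then c₀ ⟨i, h⟩ else 0) • v i
              = ∑ i ∈ s, (if h : i ∈ s then c₀ ⟨i, h⟩ else 0) • v i :=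
            (Finset.sum_subset (Finset.subset_univ s)
              (fun i _ hi => by simp [hi])).symm
          have h2 : ∑ i ∈ s, (if h : i ∈ s then c₀ ⟨i, h⟩ else 0) • v i
              = ∑ i : s, c₀ i • v (i : ι) := by
            rw [← Finset.sum_coe_sort s
              (fun i => (if h : i ∈ s then c₀ ⟨i, h⟩ else 0) • v i)]
            exact Finset.sum_congr rfl fun i _ => by simp [dif_pos i.2]
          rw [h1, h2, hz]
    rw [himg]
    have hker : LinearMap.ker (Fintype.linearCombination ℝ (fun i : s => v i)) = ⊥ := by
      rw [eq_bot_iff]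
      intro g hg
      have hg0 : ∑ i : s, g i • v (i : ι) = 0 := hg
      exact funext (Fintype.linearIndependent_iff.mp hli g hg0)
    have horth : IsClosed {c : s → ℝ | ∀ i, 0 ≤ c i} := by
      have : {c : s → ℝ | ∀ i, 0 ≤ c i} = ⋂ i : s, {c : s → ℝ | 0 ≤ c i} := by
        ext c; simp
      rw [this]
      exact isClosed_iInter fun i => isClosed_le continuous_const (continuous_apply i)
    exact ((Fintype.linearCombination ℝ
      (fun i : s => v i)).isClosedEmbedding_of_injective hker).isClosedMap _ horth
  · convert isClosed_empty
    ext z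
    simp [hli]

open scoped RealInnerProductSpace

/-- Alternative: either `b` lies in the cone generated by the `v l`, or some `y` is
nonnegative against every `v l` but negative against `b`. -/
lemma cone_alternative {E : Type*} [NormedAddCommGroup E] [InnerProductSpace ℝ E]
    [FiniteDimensional ℝ E] {ι : Type*} [Fintype ι] [DecidableEq ι] (v : ι → E) (b : E) :
    (∃ c : ι → ℝ, (∀ l, 0 ≤ c l) ∧ ∑ l, c l • v l = b) ∨
      (∃ y : E, (∀ l, 0 ≤ ⟪v l, y⟫) ∧ ⟪y, b⟫ < 0) := by
  by_cases hmem : b ∈ {z : E | ∃ c : ι → ℝ, (∀ i, 0 ≤ c i) ∧ ∑ i, c i • v i = z}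
  · exact Or.inl hmem
  · right
    set K : ConvexCone ℝ E :=
      { carrier := {z : E | ∃ c : ι → ℝ, (∀ i, 0 ≤ c i) ∧ ∑ i, c i • v i = z}
        smul_mem' := by
          rintro r hr z ⟨c, hc, rfl⟩
          refine ⟨fun l => r * c l, fun l => mul_nonneg hr.le (hc l), ?_⟩
          simp_rw [mul_smul, ← Finset.smul_sum]
        add_mem' := by
          rintro z ⟨c, hc, rfl⟩ z' ⟨c', hc', rfl⟩
          refine ⟨fun l => c l + c' l, fun l => add_nonneg (hc l) (hc' l), ?_⟩
          simp_rw [add_smul, Finset.sum_add_distrib] } with hK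
    have hne : (K : Set E).Nonempty := ⟨0, ⟨fun _ => 0, fun _ => le_rfl, by simp⟩⟩
    have hcl : IsClosed (K : Set E) := cone_isClosed v
    let C : ProperCone ℝ E :=
      { carrier := (K : Set E)
        add_mem' := fun ha hb => K.add_mem ha hb
        zero_mem' := hne.elim fun _ _ => ⟨fun _ => 0, fun _ => le_rfl, by simp⟩
        smul_mem' := by
          rintro r z ⟨c, hc, rfl⟩
          refine ⟨fun l => (r : ℝ) * c l, fun l => mul_nonneg r.2 (hc l), ?_⟩
          simp_rw [mul_smul, ← Finset.smul_sum]
          rfl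
        isClosed' := hcl }
    obtain ⟨y, hy1, hy2'⟩ := C.hyperplane_separation' (x₀ := b) hmem
    have hy2 : ⟪y, b⟫ < 0 := by rw [real_inner_comm]; exact hy2'
    refine ⟨y, fun l => ?_, hy2⟩
    refine hy1 (v l) ⟨fun l' => if l' = l then 1 else 0, ?_, ?_⟩
    · intro l'; dsimp only; split <;> norm_num
    · simp [ite_smul]
/-- Farkas' Lemma: for `A ∈ ℝ^{m×n}`, exactly one of the following holds:
(1) there is `x ∈ ℝ^n_{≥0}` with `x ∉ ker A` and `A x ≤ 0` componentwise;
(2) there is `y ∈ ℝ^m_{>0}` with `Aᵀ y ≥ 0` componentwise. -/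
theorem stmt15 (m n : ℕ) (A : Matrix (Fin m) (Fin n) ℝ) :
    Xor'
      (∃ x : Fin n → ℝ, (∀ i, 0 ≤ x i) ∧ A.mulVec x ≠ 0 ∧ ∀ i, A.mulVec x i ≤ 0)
      (∃ y : Fin m → ℝ, (∀ i, 0 < y i) ∧ ∀ j, 0 ≤ A.transpose.mulVec y j) := by
  classical
  have hnotboth : ¬ ((∃ x : Fin n → ℝ, (∀ i, 0 ≤ x i) ∧ A.mulVec x ≠ 0 ∧ ∀ i, A.mulVec x i ≤ 0)
      ∧ (∃ y : Fin m → ℝ, (∀ i, 0 < y i) ∧ ∀ j, 0 ≤ A.transpose.mulVec y j)) := by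
    rintro ⟨⟨x, hx, hAx, hAx0⟩, ⟨y, hy, hAy⟩⟩
    have hlt : ∑ i, y i * A.mulVec x i < 0 := by
      obtain ⟨i₀, hi₀⟩ : ∃ i₀, A.mulVec x i₀ ≠ 0 := by
        by_contra h
        push_neg at h
        exact hAx (funext h)
      have : ∑ i, y i * A.mulVec x i < ∑ _i : Fin m, (0 : ℝ) := by
        apply Finset.sum_lt_sum
        · intro i _
          exact mul_nonpos_of_nonneg_of_nonpos (hy i).le (hAx0 i)
        · exact ⟨i₀, Finset.mem_univ _, mul_neg_of_pos_of_neg (hy i₀)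
            (lt_of_le_of_ne (hAx0 i₀) hi₀)⟩
      simpa using this
    have hge : 0 ≤ ∑ i, y i * A.mulVec x i := by
      have h1 : ∑ i, y i * A.mulVec x i = dotProduct y (A.mulVec x) := rfl
      rw [h1, Matrix.dotProduct_mulVec, ← Matrix.mulVec_transpose]
      exact Finset.sum_nonneg fun j _ => mul_nonneg (hAy j) (hx j)
    linarith
  have hone : (∃ x : Fin n → ℝ, (∀ i, 0 ≤ x i) ∧ A.mulVec x ≠ 0 ∧ ∀ i, A.mulVec x i ≤ 0)
      ∨ (∃ y : Fin m → ℝ, (∀ i, 0 < y i) ∧ ∀ j, 0 ≤ A.transpose.mulVec y j) := by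
    by_cases h1 : ∃ x : Fin n → ℝ, (∀ i, 0 ≤ x i) ∧ A.mulVec x ≠ 0 ∧ ∀ i, A.mulVec x i ≤ 0
    · exact Or.inl h1
    · right
      -- for each coordinate `i`, find `Y ≥ 0` with `Aᵀ Y ≥ 0` and `Y i > 0`
      have key : ∀ i : Fin m, ∃ Y : Fin m → ℝ, (∀ r, 0 ≤ Y r) ∧
          (∀ j, 0 ≤ A.transpose.mulVec Y j) ∧ 0 < Y i := by
        intro i
        set E := EuclideanSpace ℝ (Fin m)
        set v : (Fin n ⊕ Fin m) → E := Sum.elim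
          (fun j => (WithLp.equiv 2 (Fin m → ℝ)).symm (fun i' => A i' j))
          (fun r => (WithLp.equiv 2 (Fin m → ℝ)).symm (fun i' => if i' = r then 1 else 0))
          with hv
        set b : E := (WithLp.equiv 2 (Fin m → ℝ)).symm (fun i' => if i' = i then -1 else 0)
          with hb
        rcases cone_alternative v b with ⟨c, hc, hsum⟩ | ⟨y, hy1, hy2⟩
        · -- contradiction with ¬(1)
          exfalso
          apply h1
          set x : Fin n → ℝ := fun j => c (Sum.inl j) with hx
          have hcoord : ∀ i' : Fin m, A.mulVec x i' = (if i' = i then (-1:ℝ) else 0)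
              - c (Sum.inr i') := by
            intro i'
            have h0 := congrArg (EuclideanSpace.proj (𝕜 := ℝ) i') hsum
            rw [map_sum] at h0
            simp only [hv, hb, map_smul] at h0
            simp only [EuclideanSpace.proj, PiLp.proj_apply, WithLp.equiv_symm_apply, PiLp.toLp_apply,
              smul_eq_mul, Fintype.sum_sum_type, Sum.elim_inl, Sum.elim_inr] at h0
            have h2 : ∑ r : Fin m, c (Sum.inr r) * (if i' = r then (1:ℝ) else 0)
                = c (Sum.inr i') := by
              rw [Finset.sum_eq_single i']
              · simp
              · intro r _ hr
                rw [if_neg (fun h => hr h.symm), mul_zero]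
              · exact fun h => absurd (Finset.mem_univ i') h
            rw [h2] at h0
            have h3 : A.mulVec x i' = ∑ j, c (Sum.inl j) * A i' j := by
              simp [Matrix.mulVec, dotProduct, hx, mul_comm]
            rw [h3]
            linarith
          refine ⟨x, fun j => hc (Sum.inl j), ?_, ?_⟩
          · intro h0
            have hthis := congrFun h0 i
            rw [hcoord i, if_pos rfl] at hthis
            simp only [Pi.zero_apply] at hthis
            have hcc := hc (Sum.inr i)
            linarith
          · intro i'
            rw [hcoord i']
            have := hc (Sum.inr i')
            split <;> linarith
        · -- extract the strictly-positive-at-i vector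
          set Y : Fin m → ℝ := WithLp.equiv 2 (Fin m → ℝ) y with hY
          have hinner : ∀ z : Fin m → ℝ,
              (inner ℝ ((WithLp.equiv 2 (Fin m → ℝ)).symm z) y : ℝ) = ∑ i', z i' * Y i' := by
            intro z
            rw [PiLp.inner_apply]
            refine Finset.sum_congr rfl fun i' _ => ?_
            simp [hY, WithLp.equiv_symm_apply, mul_comm]
          have hYnn : ∀ r, 0 ≤ Y r := by
            intro r
            have := hy1 (Sum.inr r)
            rw [hv] at this
            simp only [Sum.elim_inr] at this
            rw [hinner] at this
            simpa [Finset.sum_eq_single r] using this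
          have hAY : ∀ j, 0 ≤ A.transpose.mulVec Y j := by
            intro j
            have := hy1 (Sum.inl j)
            rw [hv] at this
            simp only [Sum.elim_inl] at this
            rw [hinner] at this
            have h3 : A.transpose.mulVec Y j = ∑ i', A i' j * Y i' := by
              simp [Matrix.mulVec, dotProduct, Matrix.transpose_apply]
            rw [h3]
            exact this
          have hYi : 0 < Y i := by
            rw [hb, real_inner_comm, hinner] at hy2
            have h4 : ∑ i', (if i' = i then (-1:ℝ) else 0) * Y i' = -Y i := by
              rw [Finset.sum_eq_single i]
              · simp
              · intro r _ hr
                rw [if_neg hr, zero_mul]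
              · exact fun h => absurd (Finset.mem_univ i) h
            rw [h4] at hy2
            linarith
          exact ⟨Y, hYnn, hAY, hYi⟩
      choose Y hY1 hY2 hY3 using key
      refine ⟨fun r => ∑ i, Y i r, ?_, ?_⟩
      · intro r
        exact Finset.sum_pos' (fun i _ => hY1 i r) ⟨r, Finset.mem_univ r, hY3 r⟩
      · intro j
        have h5 : A.transpose.mulVec (fun r => ∑ i, Y i r) j
            = ∑ i, A.transpose.mulVec (Y i) j := by
          simp only [Matrix.mulVec, dotProduct, Finset.mul_sum]
          rw [Finset.sum_comm]
        rw [h5]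
        exact Finset.sum_nonneg fun i _ => hY2 i j
  rcases hone with h | h
  · exact Or.inl ⟨h, fun h2 => hnotboth ⟨h, h2⟩⟩
  · exact Or.inr ⟨h, fun h2 => hnotboth ⟨h2, h⟩⟩
end

section
/- Consider a weakly reversible mass-action system with a semi-locking set I ⊆ {1,…,m} such that F_I = closure(C_{x₀}) ∩ L_I is a facet of C_{x₀} for some x₀ ∈ ℝ^m_{>0}. Then there exist z_j > 0 for j ∈ I and γ_i ∈ ℝ for i = 1,…,r such that γ_i z_j = β_{ij} − α_{ij} for all j ∈ I and all i ∈ {1,…,r}; that is, restricted to the coordinates in I, every column of Γ lies in the span of a single vector that is strictly positive on I. -/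
open scoped BigOperators
open Matrix Filter

/-- for a weakly reversible mass-action system with a semi-locking set `I`
such that `F_I` is a facet, there exist `z_j > 0` (`j ∈ I`) and `γ_i ∈ ℝ` with
`γ_i z_j = β_{ij} - α_{ij}` for all `j ∈ I` and all reactions `i`. -/
theorem stmt16 {m r : ℕ} (a b : Fin r → Fin m → ℕ) (k : Fin r → ℝ) (hk : ∀ i, 0 < k i)
    (hwr : WeaklyReversible a b)
    (I : Set (Fin m)) (hI : IsSemiLocking a b I)
    (x₀ : Fin m → ℝ) (hx₀ : ∀ i, 0 < x₀ i)
    (hfacet : IsFacet a b (FI a b x₀ I)) :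
    ∃ z : Fin m → ℝ, ∃ γ : Fin r → ℝ, (∀ j ∈ I, 0 < z j) ∧
      ∀ j ∈ I, ∀ i : Fin r, γ i * z j = (b i j : ℝ) - (a i j : ℝ) := by
  classical
  obtain ⟨xs, hxsC, hxsL⟩ := hfacet.1
  set W := stoichSubspace a b with hWdef
  -- closure of the compatibility class lies in x₀ + W
  have hWclosed : IsClosed (W : Set (Fin m → ℝ)) := W.closed_of_finiteDimensional
  have hclosed : IsClosed {z : Fin m → ℝ | z - x₀ ∈ W} :=
    hWclosed.preimage (continuous_id.sub continuous_const)
  have hclsub : closure (compatClass a b x₀) ⊆ {z | z - x₀ ∈ W} :=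
    closure_minimal (fun z hz => hz.2) hclosed
  have hxsW : xs - x₀ ∈ W := hclsub hxsC
  obtain ⟨x, hx⟩ : (compatClass a b x₀).Nonempty := by
    rw [← closure_nonempty_iff]; exact ⟨xs, hxsC⟩
  have hvW : x - xs ∈ W := by
    have h : x - xs = (x - x₀) - (xs - x₀) := (sub_sub_sub_cancel_right x xs x₀).symm
    rw [h]; exact sub_mem hx.2 (hclsub hxsC)
  have hvI : ∀ j ∈ I, x j - xs j = x j := by
    intro j hj; rw [hxsL.2.1 j hj, sub_zero]
  have hvpos : ∀ j ∈ I, 0 < (x - xs) j := by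
    intro j hj
    have : (x - xs) j = x j := hvI j hj
    rw [this]; exact hx.1 j
  -- projection onto the coordinates in I
  set p : (Fin m → ℝ) →ₗ[ℝ] (↥I → ℝ) :=
    LinearMap.funLeft ℝ ℝ (fun j : ↥I => (j : Fin m)) with hpdef
  have hpapply : ∀ (y : Fin m → ℝ) (j : ↥I), p y j = y (j : Fin m) := fun _ _ => rfl
  -- the direction of the affine span of F_I sits inside W ⊓ ker p
  set K : Submodule ℝ (Fin m → ℝ) := W ⊓ LinearMap.ker p with hKdef
  have hFsub : FI a b x₀ I ⊆ (AffineSubspace.mk' xs K : Set (Fin m → ℝ)) := by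
    intro y hy
    rw [AffineSubspace.mem_coe, AffineSubspace.mem_mk']
    constructor
    · have h : y -ᵥ xs = (y - x₀) - (xs - x₀) := (sub_sub_sub_cancel_right y xs x₀).symm
      rw [h]; exact sub_mem (hclsub hy.1) hxsW
    · show p (y -ᵥ xs) = 0
      funext j
      have h1 : y (j : Fin m) = 0 := hy.2.2.1 _ j.2
      have h2 : xs (j : Fin m) = 0 := hxsL.2.1 _ j.2
      show (y - xs) (j : Fin m) = 0
      simp [h1, h2]
  have hDK : (affineSpan ℝ (FI a b x₀ I)).direction ≤ K := by
    have h := AffineSubspace.direction_le (affineSpan_le.mpr hFsub)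
    rwa [AffineSubspace.direction_mk'] at h
  -- rank-nullity for p restricted to W
  have hrank : Module.finrank ℝ ↥W = (Gamma a b).rank := rfl
  set f : ↥W →ₗ[ℝ] (↥I → ℝ) := p ∘ₗ W.subtype with hfdef
  have hrange : LinearMap.range f = W.map p := by
    rw [hfdef, LinearMap.range_comp, Submodule.range_subtype]
  have hker : LinearMap.ker f = (LinearMap.ker p).comap W.subtype := by
    rw [hfdef, LinearMap.ker_comp]
  have hcomapeq : (LinearMap.ker p).comap W.subtype = K.comap W.subtype := by
    ext y
    simp [hKdef, Submodule.mem_comap, y.2]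
  have hfinker : Module.finrank ℝ ↥(LinearMap.ker f) = Module.finrank ℝ ↥K := by
    rw [hker, hcomapeq]
    exact (Submodule.comapSubtypeEquivOfLe inf_le_left).finrank_eq
  have hrn := LinearMap.finrank_range_add_finrank_ker f
  have hDfin : Module.finrank ℝ ↥((affineSpan ℝ (FI a b x₀ I)).direction)
      = (Gamma a b).rank - 1 := hfacet.2
  have hKge : (Gamma a b).rank - 1 ≤ Module.finrank ℝ ↥K := by
    rw [← hDfin]; exact Submodule.finrank_mono hDK
  have hPle : Module.finrank ℝ ↥(W.map p) ≤ 1 := by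
    rw [← hrange]
    rw [hfinker, hrank] at hrn
    omega
  -- the image of x - xs under p spans the image of W
  have hpvmem : p (x - xs) ∈ W.map p := Submodule.mem_map_of_mem hvW
  obtain ⟨j₀, hj₀⟩ := hI.1
  have hpvne : p (x - xs) ≠ 0 := by
    intro h
    have h0 : p (x - xs) ⟨j₀, hj₀⟩ = 0 := by rw [h]; rfl
    rw [hpapply] at h0
    exact absurd h0 (ne_of_gt (hvpos j₀ hj₀))
  have hspanle : Submodule.span ℝ {p (x - xs)} ≤ W.map p := by
    rw [Submodule.span_singleton_le_iff_mem]; exact hpvmem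
  have hspan1 : Module.finrank ℝ ↥(Submodule.span ℝ {p (x - xs)}) = 1 :=
    finrank_span_singleton hpvne
  have hPeq : Submodule.span ℝ {p (x - xs)} = W.map p := by
    haveI : FiniteDimensional ℝ ↥(W.map p) := by
      rw [← hrange]; exact Module.Finite.range f
    refine Submodule.eq_of_le_of_finrank_le hspanle ?_
    rw [hspan1]; exact hPle
  -- each column of Γ lies in W, hence its I-projection is a multiple of p (x - xs)
  have hcol : ∀ i : Fin r, (fun j => (b i j : ℝ) - (a i j : ℝ)) ∈ W := by
    intro i
    refine ⟨Pi.single i 1, ?_⟩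
    funext j
    show (Gamma a b).mulVec (Pi.single i 1) j = _
    simp [Matrix.mulVec, dotProduct, Pi.single_apply, Gamma]
  have hγ : ∀ i : Fin r, ∃ γ : ℝ,
      γ • p (x - xs) = p (fun j => (b i j : ℝ) - (a i j : ℝ)) := by
    intro i
    have : p (fun j => (b i j : ℝ) - (a i j : ℝ)) ∈ W.map p :=
      Submodule.mem_map_of_mem (hcol i)
    rw [← hPeq, Submodule.mem_span_singleton] at this
    exact this
  choose γ hγ' using hγ
  refine ⟨x - xs, γ, hvpos, ?_⟩
  intro j hj i
  have h := congrFun (hγ' i) ⟨j, hj⟩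
  rw [hpapply] at h
  have h2 : (γ i • p (x - xs)) ⟨j, hj⟩ = γ i * (x - xs) j := by
    rw [Pi.smul_apply, hpapply]; rfl
  rw [h2] at h
  exact h
end
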